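/- arXiv:1809.02518 — 7 statements merged into one kernel-verified Lean document; each statement's English description precedes it below -/
import Mathlib

section
/- Let ε > 0 and let q be a natural number. Suppose ψ : (ℤ/qℤ)ˣ → ℂ satisfies: |ψ(b)| ≤ C for all b (for some absolute constant C), ψ(1) = 1, and |ψ(b₁b₂) − ψ(b₁)ψ(b₂)| ≤ ε for all b₁, b₂ ∈ (ℤ/qℤ)ˣ. Then, provided ε is sufficiently small (depending only on C), there exists a group homomorphism χ : (ℤ/qℤ)ˣ → ℂˣ taking values in the unit circle such that |ψ(b) − χ(b)| ≤ C'·ε for all b ∈ (ℤ/qℤ)ˣ, where C' depends only on C. -/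
open Complex Finset

theorem aux_stability {G : Type*} [CommGroup G] [Finite G] (C : ℝ) (hC : 1 ≤ C)
    (ε : ℝ) (hε : 0 < ε) (hε₀ : ε ≤ 1 / (100 * C ^ 2))
    (ψ : G → ℂ) (hb : ∀ b, ‖ψ b‖ ≤ C) (h1 : ψ 1 = 1)
    (hm : ∀ b₁ b₂, ‖ψ (b₁ * b₂) - ψ b₁ * ψ b₂‖ ≤ ε) :
    ∃ χ : G →* ℂˣ, (∀ b, ‖((χ b : ℂˣ) : ℂ)‖ = 1) ∧
      ∀ b, ‖ψ b - ((χ b : ℂˣ) : ℂ)‖ ≤ 16 * C ^ 3 * ε := by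
  cases nonempty_fintype G
  have hC0 : (0:ℝ) < C := lt_of_lt_of_le one_pos hC
  have hε100 : ε ≤ 1 / 100 := by
    calc ε ≤ 1 / (100 * C ^ 2) := hε₀
      _ ≤ 1 / 100 := by
        apply one_div_le_one_div_of_le (by norm_num)
        nlinarith
  have hεsmall : 4 * C ^ 2 * ε ≤ 1 / 25 := by
    have h4 : 4 * C ^ 2 * ε ≤ 4 * C ^ 2 * (1 / (100 * C ^ 2)) :=
      mul_le_mul_of_nonneg_left hε₀ (by positivity)
    calc 4 * C ^ 2 * ε ≤ 4 * C ^ 2 * (1 / (100 * C ^ 2)) := h4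
      _ = 1 / 25 := by field_simp; ring
  -- lower bound on |ψ|
  have hlow : ∀ b, 1 / (2 * C) ≤ ‖ψ b‖ := by
    intro b
    have h := hm b b⁻¹
    rw [mul_inv_cancel, h1] at h
    have htri : ‖(1:ℂ)‖ ≤ ‖1 - ψ b * ψ b⁻¹‖
        + ‖ψ b * ψ b⁻¹‖ := by
      calc ‖(1:ℂ)‖ = ‖(1 - ψ b * ψ b⁻¹) + ψ b * ψ b⁻¹‖ := by
            norm_num
        _ ≤ _ := norm_add_le _ _
    rw [norm_one, norm_mul] at htri
    have hbinv : ‖ψ b⁻¹‖ ≤ C := hb _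
    have hnn : (0:ℝ) ≤ ‖ψ b‖ := norm_nonneg _
    have hnn' : (0:ℝ) ≤ ‖ψ b⁻¹‖ := norm_nonneg _
    rw [div_le_iff₀ (by positivity)]
    nlinarith [mul_nonneg hnn (sub_nonneg.mpr hbinv)]
  have hne : ∀ b, ψ b ≠ 0 := by
    intro b hb0
    have h := hlow b
    rw [hb0, norm_zero] at h
    have : (0:ℝ) < 1 / (2 * C) := by positivity
    linarith
  set f : G → G → ℂ := fun x y => ψ (x * y) / (ψ x * ψ y) with hfdef
  have hden : ∀ x y : G, 1 / (4 * C ^ 2) ≤ ‖ψ x * ψ y‖ := by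
    intro x y
    rw [norm_mul]
    have h1' := hlow x
    have h2' := hlow y
    have h3' : 1 / (2 * C) * (1 / (2 * C)) ≤ ‖ψ x‖ * ‖ψ y‖ :=
      mul_le_mul h1' h2' (by positivity) (norm_nonneg _)
    calc 1 / (4 * C ^ 2) = 1 / (2 * C) * (1 / (2 * C)) := by field_simp; ring
      _ ≤ _ := h3'
  have hmulne : ∀ x y : G, ψ x * ψ y ≠ 0 := fun x y => mul_ne_zero (hne x) (hne y)
  have hf1 : ∀ x y, ‖f x y - 1‖ ≤ 4 * C ^ 2 * ε := by
    intro x y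
    have heq : f x y - 1 = (ψ (x * y) - ψ x * ψ y) / (ψ x * ψ y) := by
      rw [hfdef]
      exact div_sub_one (hmulne x y) ▸ rfl
    rw [heq, norm_div]
    rw [div_le_iff₀ (lt_of_lt_of_le (by positivity) (hden x y))]
    have h1' := hm x y
    have h2' := hden x y
    have hprod : 4 * C ^ 2 * ε * (1 / (4 * C ^ 2)) ≤
        4 * C ^ 2 * ε * ‖ψ x * ψ y‖ :=
      mul_le_mul_of_nonneg_left h2' (by positivity)
    have hx : 4 * C ^ 2 * ε * (1 / (4 * C ^ 2)) = ε := by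
      field_simp
    linarith
  have hfne : ∀ x y, f x y ≠ 0 := fun x y => div_ne_zero (hne _) (hmulne x y)
  set L : G → G → ℂ := fun x y => Complex.log (f x y) with hLdef
  have hexpL : ∀ x y, Complex.exp (L x y) = f x y := fun x y =>
    Complex.exp_log (hfne x y)
  have hL : ∀ x y, ‖L x y‖ ≤ 8 * C ^ 2 * ε := by
    intro x y
    have hz : ‖f x y - 1‖ ≤ 1 / 2 := by
      linarith [hf1 x y, hεsmall]
    have hlog := Complex.norm_log_one_add_half_le_self hz
    rw [add_sub_cancel] at hlog
    calc ‖L x y‖ ≤ 3 / 2 * ‖f x y - 1‖ := hlog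
      _ ≤ 3 / 2 * (4 * C ^ 2 * ε) :=
          mul_le_mul_of_nonneg_left (hf1 x y) (by norm_num)
      _ ≤ 8 * C ^ 2 * ε := by nlinarith
  have hLsmall : ∀ x y, ‖L x y‖ ≤ 2 / 25 := by
    intro x y
    calc ‖L x y‖ ≤ 8 * C ^ 2 * ε := hL x y
      _ = 2 * (4 * C ^ 2 * ε) := by ring
      _ ≤ 2 / 25 := by linarith
  -- multiplicative cocycle identity
  have fm : ∀ x y z : G, f x y * f (x * y) z = f y z * f x (y * z) := by
    intro x y z
    have hassoc : x * (y * z) = x * y * z := (mul_assoc x y z).symm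
    rw [hfdef]
    simp only [hassoc]
    field_simp [hne x, hne y, hne z, hne (x*y), hne (y*z), hne (x*y*z)]
  -- additive cocycle identity
  have Lc : ∀ x y z : G, L x y + L (x * y) z = L y z + L x (y * z) := by
    intro x y z
    have he : Complex.exp (L x y + L (x * y) z) = Complex.exp (L y z + L x (y * z)) := by
      rw [Complex.exp_add, Complex.exp_add, hexpL, hexpL, hexpL, hexpL]
      exact fm x y z
    obtain ⟨n, hn⟩ := Complex.exp_eq_exp_iff_exists_int.mp he
    have habs : ‖(n : ℂ) * (2 * Real.pi * Complex.I)‖ ≤ 8 / 25 := by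
      have heq : (n : ℂ) * (2 * Real.pi * Complex.I) =
          (L x y + L (x * y) z) - (L y z + L x (y * z)) := by
        rw [hn]; ring
      rw [heq]
      calc ‖_‖ ≤ ‖L x y + L (x * y) z‖ +
            ‖L y z + L x (y * z)‖ := norm_sub_le _ _
        _ ≤ (2/25 + 2/25) + (2/25 + 2/25) := by
            have a1 := norm_add_le (L x y) (L (x * y) z)
            have a2 := norm_add_le (L y z) (L x (y * z))
            linarith [hLsmall x y, hLsmall (x*y) z, hLsmall y z, hLsmall x (y*z)]
        _ = 8 / 25 := by norm_num
    have hn0 : n = 0 := by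
      by_contra h0
      have h1' : (1:ℝ) ≤ |(n:ℝ)| := by
        have : (1:ℤ) ≤ |n| := Int.one_le_abs h0
        exact_mod_cast this
      have hval : ‖(n : ℂ) * (2 * Real.pi * Complex.I)‖ =
          |(n:ℝ)| * (2 * Real.pi) := by
        rw [norm_mul, norm_mul, norm_mul]
        simp [abs_of_pos Real.pi_pos]
      rw [hval] at habs
      have hpi := Real.pi_gt_three
      nlinarith
    rw [hn0] at hn
    simpa using hn
  set N : ℕ := Fintype.card G with hNdef
  have hNpos : 0 < N := Fintype.card_pos
  have hNne : (N : ℂ) ≠ 0 := Nat.cast_ne_zero.mpr hNpos.ne'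
  set A : G → ℂ := fun x => (∑ y, L x y) / N with hAdef
  have hNA : ∀ x, (N : ℂ) * A x = ∑ y, L x y := by
    intro x
    rw [hAdef]
    field_simp
  -- key identity: L is a coboundary
  have key : ∀ x y, L x y = A x + A y - A (x * y) := by
    intro x y
    have hsum : (N : ℂ) * L x y = (N : ℂ) * (A x + A y - A (x * y)) := by
      calc (N : ℂ) * L x y = ∑ _z : G, L x y := by
            rw [Finset.sum_const, Finset.card_univ, nsmul_eq_mul]
        _ = ∑ z : G, (L y z + L x (y * z) - L (x * y) z) := by
            apply Finset.sum_congr rfl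
            intro z _
            linear_combination Lc x y z
        _ = ((∑ z : G, L y z) + ∑ z : G, L x (y * z)) - ∑ z : G, L (x * y) z := by
            rw [Finset.sum_sub_distrib, Finset.sum_add_distrib]
        _ = ((∑ z : G, L y z) + ∑ z : G, L x z) - ∑ z : G, L (x * y) z := by
            congr 1
            congr 1
            exact Fintype.sum_equiv (Equiv.mulLeft y) _ _ (fun z => rfl)
        _ = (N : ℂ) * (A x + A y - A (x * y)) := by
            rw [mul_sub, mul_add, hNA, hNA, hNA]
            ring
    exact mul_left_cancel₀ hNne hsum
  have hA : ∀ x, ‖A x‖ ≤ 8 * C ^ 2 * ε := by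
    intro x
    have hs : ‖∑ y, L x y‖ ≤ (N : ℝ) * (8 * C ^ 2 * ε) := by
      calc ‖∑ y, L x y‖ ≤ ∑ y, ‖L x y‖ :=
            norm_sum_le _ _
        _ ≤ ∑ _y : G, 8 * C ^ 2 * ε := Finset.sum_le_sum (fun y _ => hL x y)
        _ = (N : ℝ) * (8 * C ^ 2 * ε) := by
            rw [Finset.sum_const, Finset.card_univ, nsmul_eq_mul]
    have heq : ‖A x‖ = ‖∑ y, L x y‖ / N := by
      rw [hAdef]
      simp only []
      rw [norm_div, Complex.norm_natCast]
    rw [heq, div_le_iff₀ (by exact_mod_cast hNpos)]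
    calc ‖∑ y, L x y‖ ≤ (N : ℝ) * (8 * C ^ 2 * ε) := hs
      _ = 8 * C ^ 2 * ε * N := by ring
  set χ₀ : G → ℂ := fun x => ψ x * Complex.exp (A x) with hχdef
  have hχne : ∀ x, χ₀ x ≠ 0 := fun x => mul_ne_zero (hne x) (Complex.exp_ne_zero _)
  have hχmul : ∀ x y, χ₀ (x * y) = χ₀ x * χ₀ y := by
    intro x y
    have hψ : ψ (x * y) = ψ x * ψ y * f x y := by
      rw [hfdef]
      field_simp
      rw [mul_assoc (ψ (x * y))]
      exact (mul_div_cancel_right₀ _ (hmulne x y)).symm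
    have hexps : Complex.exp (A x + A y - A (x * y)) * Complex.exp (A (x * y)) =
        Complex.exp (A x) * Complex.exp (A y) := by
      rw [← Complex.exp_add, ← Complex.exp_add]
      congr 1
      ring
    show ψ (x * y) * Complex.exp (A (x * y)) =
      (ψ x * Complex.exp (A x)) * (ψ y * Complex.exp (A y))
    calc ψ (x * y) * Complex.exp (A (x * y))
        = ψ x * ψ y * (Complex.exp (A x + A y - A (x * y)) * Complex.exp (A (x * y))) := by
          rw [hψ, ← hexpL x y, key x y]; ring
      _ = ψ x * ψ y * (Complex.exp (A x) * Complex.exp (A y)) := by rw [hexps]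
      _ = (ψ x * Complex.exp (A x)) * (ψ y * Complex.exp (A y)) := by ring
  let χ : G →* ℂˣ := MonoidHom.mk' (fun b => Units.mk0 (χ₀ b) (hχne b))
      (fun a b => by ext; simp [hχmul a b])
  have hχcoe : ∀ b, ((χ b : ℂˣ) : ℂ) = χ₀ b := fun b => rfl
  have hcirc : ∀ b, ‖χ₀ b‖ = 1 := by
    intro b
    have hord : 0 < orderOf b := orderOf_pos b
    have hpow : (χ b) ^ orderOf b = 1 := by
      rw [← map_pow, pow_orderOf_eq_one, map_one]
    have hval : χ₀ b ^ orderOf b = 1 := by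
      have := congrArg Units.val hpow
      simpa [hχcoe] using this
    have habs : ‖χ₀ b‖ ^ orderOf b = 1 := by
      rw [← norm_pow, hval, norm_one]
    rcases lt_trichotomy (‖χ₀ b‖) 1 with h | h | h
    · exfalso
      have := pow_lt_one₀ (norm_nonneg _) h hord.ne'
      rw [habs] at this
      exact lt_irrefl 1 this
    · exact h
    · exfalso
      have := one_lt_pow₀ h hord.ne'
      rw [habs] at this
      exact lt_irrefl 1 this
  refine ⟨χ, fun b => by rw [hχcoe]; exact hcirc b, ?_⟩
  intro b
  rw [hχcoe]
  have hAb1 : ‖A b‖ ≤ 1 := by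
    have := hA b
    linarith
  have hsub : ψ b - χ₀ b = ψ b * (1 - Complex.exp (A b)) := by
    rw [hχdef]
    ring
  rw [hsub, norm_mul]
  have h2 : ‖1 - Complex.exp (A b)‖ ≤ 2 * ‖A b‖ := by
    rw [← norm_neg, neg_sub]
    exact Complex.norm_exp_sub_one_le hAb1
  calc ‖ψ b‖ * ‖1 - Complex.exp (A b)‖
      ≤ C * (2 * (8 * C ^ 2 * ε)) :=
        mul_le_mul (hb b) (le_trans h2 (by linarith [hA b])) (norm_nonneg _)
          (le_of_lt hC0)
    _ = 16 * C ^ 3 * ε := by ring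

/-- Stability of Dirichlet characters: an approximate character on `(ZMod q)ˣ`
is uniformly close to an exact character. -/
theorem stmt0 (C : ℝ) (hC : 0 < C) :
    ∃ ε₀ > (0:ℝ), ∃ C' > (0:ℝ), ∀ ε : ℝ, 0 < ε → ε ≤ ε₀ →
      ∀ (q : ℕ) (ψ : (ZMod q)ˣ → ℂ),
        (∀ b, ‖ψ b‖ ≤ C) →
        ψ 1 = 1 →
        (∀ b₁ b₂, ‖ψ (b₁ * b₂) - ψ b₁ * ψ b₂‖ ≤ ε) →
        ∃ χ : (ZMod q)ˣ →* ℂˣ,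
          (∀ b, ‖((χ b : ℂˣ) : ℂ)‖ = 1) ∧
          (∀ b, ‖ψ b - ((χ b : ℂˣ) : ℂ)‖ ≤ C' * ε) := by
  set M : ℝ := max C 1 with hM
  have hM1 : 1 ≤ M := le_max_right _ _
  have hM0 : 0 < M := lt_of_lt_of_le one_pos hM1
  refine ⟨1 / (100 * M ^ 2), by positivity, 16 * M ^ 3, by positivity, ?_⟩
  intro ε hε hε₀ q ψ hb h1 hm
  haveI : Finite (ZMod q)ˣ := by
    cases q with
    | zero => exact inferInstanceAs (Finite ℤˣ)
    | succ n => infer_instance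
  obtain ⟨χ, hχ1, hχ2⟩ := aux_stability M hM1 ε hε hε₀ ψ
    (fun b => (hb b).trans (le_max_left _ _)) h1 hm
  exact ⟨χ, hχ1, fun b => by simpa [mul_comm] using hχ2 b⟩
end

section
/- Let ε > 0 be sufficiently small, and let α : (0,∞) → ℂ be a Lebesgue measurable function satisfying: |α(x)| ≤ C for all x > 0 (for an absolute constant C), |α(x) − 1| ≤ ε whenever |x − 1| ≤ ε, and |α(xy) − α(x)α(y)| ≤ ε for all x, y > 0. Then there exists a real number t such that |α(x) − x^{−it}| ≤ C'·ε for all x > 0, where C' depends only on C. -/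
open MeasureTheory intervalIntegral Complex Filter

/-- Compatibility: the complex absolute value as an absolute value given by the norm. -/
noncomputable def Complex.abs : AbsoluteValue ℂ ℝ where
  toFun z := ‖z‖
  map_mul' := norm_mul
  nonneg' := norm_nonneg
  eq_zero' _ := norm_eq_zero
  add_le' := norm_add_le

theorem Complex.norm_eq_abs (z : ℂ) : ‖z‖ = Complex.abs z := rfl

theorem Complex.abs_ofReal (r : ℝ) : Complex.abs (r : ℂ) = |r| := by
  show ‖(r : ℂ)‖ = |r|
  simp

theorem Complex.abs_add_mul_I (x y : ℝ) :
    Complex.abs ((x : ℂ) + y * Complex.I) = Real.sqrt (x ^ 2 + y ^ 2) :=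
  Complex.norm_add_mul_I x y

theorem Complex.abs_exp (z : ℂ) : Complex.abs (Complex.exp z) = Real.exp z.re :=
  Complex.norm_exp z

theorem Complex.abs_le_abs_re_add_abs_im (z : ℂ) : Complex.abs z ≤ |z.re| + |z.im| :=
  Complex.norm_le_abs_re_add_abs_im z

theorem Complex.abs_re_le_abs (z : ℂ) : |z.re| ≤ Complex.abs z :=
  Complex.abs_re_le_norm z

theorem Complex.abs_exp_sub_one_le {x : ℂ} (hx : Complex.abs x ≤ 1) :
    Complex.abs (Complex.exp x - 1) ≤ 2 * Complex.abs x :=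
  Complex.norm_exp_sub_one_le hx

lemma aux_II {f : ℝ → ℂ} (hf : Measurable f) {B : ℝ}
    (hB : ∀ x, Complex.abs (f x) ≤ B) (a b : ℝ) :
    IntervalIntegrable f volume a b := by
  rw [intervalIntegrable_iff]
  have : IsFiniteMeasure (volume.restrict (Set.uIoc a b)) := by
    constructor
    rw [Measure.restrict_apply_univ]
    exact measure_Ioc_lt_top
  refine (integrable_const B).mono' hf.aestronglyMeasurable ?_
  filter_upwards with x using by simpa [Complex.norm_eq_abs] using hB x

lemma aux_lb (a b : ℂ) : Complex.abs a - Complex.abs b ≤ Complex.abs (a - b) := by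
  simpa [Complex.norm_eq_abs] using norm_sub_norm_le a b


lemma aux_angle (θ : ℝ) : ∃ k : ℤ,
    |θ - 2*Real.pi*k| ≤ (Real.pi/2) * Complex.abs (Complex.exp (θ*Complex.I) - 1) := by
  have hπ := Real.pi_pos
  refine ⟨round (θ / (2*Real.pi)), ?_⟩
  set k : ℤ := round (θ / (2*Real.pi))
  set θ' : ℝ := θ - 2*Real.pi*k with hθ'
  have h1 : |θ'| ≤ Real.pi := by
    have := abs_sub_round (θ / (2*Real.pi))
    rw [abs_sub_comm] at this
    have h2π : (0:ℝ) < 2*Real.pi := by linarith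
    have : |θ'/(2*Real.pi)| ≤ 1/2 := by
      have : θ'/(2*Real.pi) = θ / (2*Real.pi) - k := by
        rw [hθ']; field_simp
      rw [this, abs_sub_comm]
      simpa [abs_sub_comm] using abs_sub_round (θ / (2*Real.pi))
    rw [abs_div, abs_of_pos h2π, div_le_iff₀ h2π] at this
    linarith
  have h2 : Complex.exp (θ*Complex.I) = Complex.exp (θ'*Complex.I) := by
    have : (θ:ℂ)*Complex.I = θ'*Complex.I + k * (2 * Real.pi * Complex.I) := by
      push_cast [hθ']; ring
    rw [this, Complex.exp_add, Complex.exp_int_mul_two_pi_mul_I, mul_one]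
  have h3 : Complex.abs (Complex.exp ((θ':ℝ)*Complex.I) - 1)
      = Real.sqrt (2 - 2*Real.cos θ') := by
    have he : Complex.exp ((θ':ℝ)*Complex.I) - 1
        = Complex.ofReal (Real.cos θ' - 1) + Complex.ofReal (Real.sin θ') * Complex.I := by
      rw [Complex.exp_mul_I]
      push_cast
      ring
    rw [he, Complex.abs_add_mul_I]
    congr 1
    linear_combination Real.sin_sq_add_cos_sq θ'
  rw [h2, h3]
  set s := |θ'| with hs
  have hs0 : 0 ≤ s := abs_nonneg _
  have hcos : Real.cos s = Real.cos θ' := Real.cos_abs θ'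
  have hhalf : s/2 ≤ Real.pi/2 := by linarith
  have hsin : 2/Real.pi * (s/2) ≤ Real.sin (s/2) := Real.mul_le_sin (by linarith) hhalf
  have hsin0 : 0 ≤ Real.sin (s/2) := Real.sin_nonneg_of_nonneg_of_le_pi (by linarith) (by linarith)
  have hcos2 : 2 - 2*Real.cos θ' = (2*Real.sin (s/2))^2 := by
    have : Real.cos s = 1 - 2 * Real.sin (s/2)^2 := by
      have h := Real.cos_two_mul' (s/2)
      rw [show 2*(s/2) = s by ring] at h
      rw [h]
      linear_combination Real.sin_sq_add_cos_sq (s/2)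
    rw [← hcos, this]; ring
  rw [hcos2, Real.sqrt_sq (by linarith)]
  have : s ≤ Real.pi * Real.sin (s/2) := by
    have h2 : 2/Real.pi * (s/2) * Real.pi ≤ Real.sin (s/2) * Real.pi := by
      exact mul_le_mul_of_nonneg_right hsin (le_of_lt hπ)
    have : 2/Real.pi * (s/2) * Real.pi = s := by field_simp
    nlinarith
  calc |θ'| = s := rfl
    _ ≤ Real.pi * Real.sin (s/2) := this
    _ = Real.pi/2 * (2*Real.sin (s/2)) := by ring


lemma aux_re (w : ℂ) (η : ℝ) (hη : 0 < η) (hη2 : η ≤ 1/2)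
    (hw : Complex.abs (Complex.exp w - 1) ≤ η) : |w.re| ≤ 2*η := by
  have h1 : Complex.abs (Complex.exp w) ≤ 1 + η := by
    have := aux_lb (Complex.exp w) 1
    simp at this
    linarith
  have h2 : 1 - η ≤ Complex.abs (Complex.exp w) := by
    have := aux_lb 1 (Complex.exp w)
    rw [← Complex.abs.map_neg (1 - Complex.exp w), neg_sub] at this
    simp at this
    linarith
  rw [Complex.abs_exp] at h1 h2
  have hup : w.re ≤ η := by
    have : Real.exp w.re ≤ Real.exp η := le_trans h1 (by linarith [Real.add_one_le_exp η])
    exact (Real.exp_le_exp).mp this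
  have hlo : -(2*η) ≤ w.re := by
    have hkey : Real.exp (-(2*η)) ≤ 1 - η := by
      have h3 := Real.add_one_le_exp (2*η)
      have h4 : Real.exp (-(2*η)) = 1 / Real.exp (2*η) := by
        rw [Real.exp_neg]; ring
      rw [h4]
      rw [div_le_iff₀ (Real.exp_pos _)]
      nlinarith [Real.exp_pos (2*η)]
    have : Real.exp (-(2*η)) ≤ Real.exp w.re := le_trans hkey h2
    exact (Real.exp_le_exp).mp this
  rw [abs_le]; exact ⟨by linarith, by linarith⟩

section Step1

variable (C ε : ℝ) (hC : 0 < C) (hε : 0 < ε) (hε' : ε ≤ 1/100000)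
    (β : ℝ → ℂ) (hmeas : Measurable β)
    (hbound : ∀ u, Complex.abs (β u) ≤ C)
    (hnear : ∀ u, |u| ≤ ε/2 → Complex.abs (β u - 1) ≤ ε)
    (hmul : ∀ u v, Complex.abs (β (u+v) - β u * β v) ≤ ε)

include hC hε hε' hmeas hbound hnear hmul

lemma aux_ub : ∀ u, Complex.abs (β u) ≤ 1 + ε := by
  have hbdd : BddAbove (Set.range fun u => Complex.abs (β u)) :=
    ⟨C, by rintro x ⟨u, rfl⟩; exact hbound u⟩
  set M := ⨆ u, Complex.abs (β u) with hM
  have hMle : ∀ u, Complex.abs (β u) ≤ M := fun u => le_ciSup hbdd u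
  have hM0 : 0 ≤ M := le_trans (Complex.abs.nonneg _) (hMle 0)
  have hMsq : M^2 ≤ M + ε := by
    have key : ∀ u, Complex.abs (β u) ≤ Real.sqrt (M + ε) := by
      intro u
      have h1 := hmul u u
      have h2 : Complex.abs (β u * β u) - Complex.abs (β (u+u)) ≤ ε := by
        have := aux_lb (β u * β u) (β (u+u))
        rw [← Complex.abs.map_neg (β u * β u - β (u+u)), neg_sub] at this
        linarith
      have h3 : Complex.abs (β u) ^ 2 ≤ M + ε := by
        have h5 := hMle (u+u)
        have hm : Complex.abs (β u) ^ 2 = Complex.abs (β u * β u) := by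
          rw [Complex.abs.map_mul]; ring
        linarith
      calc Complex.abs (β u) = Real.sqrt (Complex.abs (β u) ^ 2) := by
            rw [Real.sqrt_sq (Complex.abs.nonneg _)]
        _ ≤ Real.sqrt (M + ε) := Real.sqrt_le_sqrt h3
    have : M ≤ Real.sqrt (M + ε) := ciSup_le key
    have h4 : Real.sqrt (M + ε) ^ 2 = M + ε := Real.sq_sqrt (by linarith)
    nlinarith [this, hM0]
  have : M ≤ 1 + ε := by nlinarith [hMsq, hM0, hε]
  exact fun u => le_trans (hMle u) this

lemma aux_lower : ∀ u, 1 - 3*ε ≤ Complex.abs (β u) := by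
  have hβ2 := aux_ub C ε hC hε hε' β hmeas hbound hnear hmul
  intro u
  have h0 : 1 - ε ≤ Complex.abs (β 0) := by
    have := hnear 0 (by simp; linarith)
    have h2 := aux_lb 1 (β 0)
    rw [← Complex.abs.map_neg (1 - β 0), neg_sub] at h2
    simp at h2
    linarith
  have h1 := hmul u (-u)
  have h2 : Complex.abs (β 0) - Complex.abs (β u * β (-u)) ≤ ε := by
    have := aux_lb (β (u + -u)) (β u * β (-u))
    simp only [add_neg_cancel] at this h1
    linarith
  have h3 : 1 - 2*ε ≤ Complex.abs (β u) * Complex.abs (β (-u)) := by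
    rw [← Complex.abs.map_mul]; linarith
  have h4 := hβ2 (-u)
  have h5 := Complex.abs.nonneg (β u)
  nlinarith

end Step1

set_option maxHeartbeats 1000000 in
lemma aux_additive (C ε : ℝ) (hC : 0 < C) (hε : 0 < ε) (hε' : ε ≤ 1/100000)
    (β : ℝ → ℂ) (hmeas : Measurable β)
    (hbound : ∀ u, Complex.abs (β u) ≤ C)
    (hnear : ∀ u, |u| ≤ ε/2 → Complex.abs (β u - 1) ≤ ε)
    (hmul : ∀ u v, Complex.abs (β (u+v) - β u * β v) ≤ ε) :
    ∃ t : ℝ, ∀ u : ℝ, Complex.abs (β u - Complex.exp (-(Complex.I*t*u))) ≤ 1000*ε := by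
  have hβ2 : ∀ u, Complex.abs (β u) ≤ 1 + ε := aux_ub C ε hC hε hε' β hmeas hbound hnear hmul
  have hβlow : ∀ u, 1 - 3*ε ≤ Complex.abs (β u) :=
    aux_lower C ε hC hε hε' β hmeas hbound hnear hmul
  have hβ2' : ∀ u, Complex.abs (β u) ≤ 2 := fun u => le_trans (hβ2 u) (by linarith)
  set L : ℝ := ε/4 with hLdef
  have hL : 0 < L := by positivity
  -- first average
  set G : ℝ → ℂ := fun u => ∫ v in (0:ℝ)..L, β (u + v) with hGdef
  have hGval : ∀ u w, Complex.abs (G (u+w) - β u * G w) ≤ ε * L := by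
    intro u w
    have hi1 : IntervalIntegrable (fun v => β (u+w+v)) volume 0 L :=
      aux_II (f := fun v => β (u+w+v)) (hmeas.comp (measurable_const_add _))
        (fun x => hβ2' _) 0 L
    have hi2 : IntervalIntegrable (fun v => β u * β (w+v)) volume 0 L := by
      refine aux_II (f := fun v => β u * β (w+v)) (B := 4)
        ((measurable_const.mul (hmeas.comp (measurable_const_add _)))) ?_ 0 L
      intro x
      rw [Complex.abs.map_mul]
      calc Complex.abs (β u) * Complex.abs (β (w+x)) ≤ 2 * 2 :=
        mul_le_mul (hβ2' u) (hβ2' (w+x)) (Complex.abs.nonneg _) (by norm_num)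
      _ ≤ 4 := by norm_num
    have heq : G (u+w) - β u * G w = ∫ v in (0:ℝ)..L, (β (u+w+v) - β u * β (w+v)) := by
      rw [intervalIntegral.integral_sub hi1 hi2, hGdef]
      simp only []
      rw [intervalIntegral.integral_const_mul]
    rw [heq, ← Complex.norm_eq_abs]
    have := intervalIntegral.norm_integral_le_of_norm_le_const
      (C := ε) (f := fun v => β (u+w+v) - β u * β (w+v)) (a := 0) (b := L) ?_
    · calc ‖∫ v in (0:ℝ)..L, (β (u+w+v) - β u * β (w+v))‖ ≤ ε * |L - 0| := this
        _ = ε * L := by rw [sub_zero, abs_of_pos hL]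
    · intro x _
      rw [Complex.norm_eq_abs]
      have := hmul u (w+x)
      rw [show u + (w+x) = u+w+x by ring] at this
      exact this
  have hPcont : Continuous (fun b => ∫ x in (0:ℝ)..b, β x) :=
    intervalIntegral.continuous_primitive (fun a b => aux_II hmeas hβ2' a b) 0
  have hGalt : ∀ u, G u = (∫ x in (0:ℝ)..(u+L), β x) - ∫ x in (0:ℝ)..u, β x := by
    intro u
    rw [hGdef]
    simp only []
    rw [intervalIntegral.integral_comp_add_left (fun x => β x) u]
    simp only [add_zero]
    rw [← intervalIntegral.integral_interval_sub_left (aux_II hmeas hβ2' 0 (u+L))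
      (aux_II hmeas hβ2' 0 u)]
  have hGcont : Continuous G := by
    have : G = fun u => (∫ x in (0:ℝ)..(u+L), β x) - ∫ x in (0:ℝ)..u, β x := funext hGalt
    rw [this]
    exact (hPcont.comp (continuous_id.add continuous_const)).sub hPcont
  have hGbound : ∀ u, Complex.abs (G u) ≤ 2*L := by
    intro u
    rw [← Complex.norm_eq_abs]
    have := intervalIntegral.norm_integral_le_of_norm_le_const
      (C := 2) (f := fun v => β (u+v)) (a := 0) (b := L)
      (fun x _ => by rw [Complex.norm_eq_abs]; exact hβ2' (u+x))
    calc ‖G u‖ ≤ 2 * |L - 0| := this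
      _ = 2 * L := by rw [sub_zero, abs_of_pos hL]
  have hGshiftcont : ∀ a : ℝ, Continuous (fun w : ℝ => G (a + w)) :=
    fun a => hGcont.comp (continuous_const.add continuous_id)
  -- second average
  set H : ℝ → ℂ := fun u => ∫ w in (0:ℝ)..L, G (u + w) with hHdef
  set d : ℂ := H 0 with hddef
  have hHval : ∀ u, Complex.abs (H u - β u * d) ≤ ε * L^2 := by
    intro u
    have hi1 : IntervalIntegrable (fun w => G (u+w)) volume 0 L :=
      (hGshiftcont u).intervalIntegrable 0 L
    have hi2 : IntervalIntegrable (fun w => β u * G (0+w)) volume 0 L :=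
      (continuous_const.mul (hGshiftcont 0)).intervalIntegrable 0 L
    have heq : H u - β u * d = ∫ w in (0:ℝ)..L, (G (u+w) - β u * G (0+w)) := by
      rw [intervalIntegral.integral_sub hi1 hi2, hHdef]
      simp only []
      rw [intervalIntegral.integral_const_mul]
    rw [heq, ← Complex.norm_eq_abs]
    have := intervalIntegral.norm_integral_le_of_norm_le_const
      (C := ε * L) (f := fun w => G (u+w) - β u * G (0+w)) (a := 0) (b := L) ?_
    · calc ‖∫ w in (0:ℝ)..L, (G (u+w) - β u * G (0+w))‖ ≤ ε * L * |L - 0| := this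
        _ = ε * L^2 := by rw [sub_zero, abs_of_pos hL]; ring
    · intro x _
      simpa [Complex.norm_eq_abs] using hGval u x
  have hd : Complex.abs (d - ((L^2 : ℝ) : ℂ)) ≤ ε * L^2 := by
    have hGnear : ∀ w ∈ Set.uIoc (0:ℝ) L, ‖G w - ((L:ℝ) : ℂ)‖ ≤ ε * L := by
      intro w hw
      rw [Set.uIoc_of_le (le_of_lt hL)] at hw
      have hint : IntervalIntegrable (fun v => β (w+v) - 1) volume 0 L := by
        refine aux_II (f := fun v => β (w+v) - 1) (B := 3)
          ((hmeas.comp (measurable_const_add _)).sub measurable_const) ?_ 0 L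
        intro x
        calc Complex.abs (β (w+x) - 1) ≤ Complex.abs (β (w+x)) + Complex.abs 1 := by
              simpa [Complex.norm_eq_abs] using norm_sub_le (β (w+x)) 1
          _ ≤ 3 := by
              have := hβ2' (w+x); simp at *; linarith
      have heq : G w - ((L:ℝ):ℂ) = ∫ v in (0:ℝ)..L, (β (w+v) - 1) := by
        rw [intervalIntegral.integral_sub
          (aux_II (f := fun v => β (w+v)) (hmeas.comp (measurable_const_add _))
            (fun x => hβ2' _) 0 L) (intervalIntegrable_const), hGdef]
        simp only []
        congr 1
        rw [intervalIntegral.integral_const]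
        simp
      rw [heq]
      have := intervalIntegral.norm_integral_le_of_norm_le_const
        (C := ε) (f := fun v => β (w+v) - 1) (a := 0) (b := L) ?_
      · calc ‖∫ v in (0:ℝ)..L, (β (w+v) - 1)‖ ≤ ε * |L - 0| := this
          _ = ε * L := by rw [sub_zero, abs_of_pos hL]
      · intro x hx
        rw [Set.uIoc_of_le (le_of_lt hL)] at hx
        rw [Complex.norm_eq_abs]
        apply hnear
        rw [_root_.abs_of_nonneg (by linarith [hw.1.le, hx.1.le] : (0:ℝ) ≤ w + x)]
        have : L + L = ε/2 := by rw [hLdef]; ring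
        linarith [hw.2, hx.2]
    have heq : d - ((L^2:ℝ):ℂ) = ∫ w in (0:ℝ)..L, (G (0+w) - ((L:ℝ):ℂ)) := by
      rw [intervalIntegral.integral_sub ((hGshiftcont 0).intervalIntegrable 0 L)
        (intervalIntegrable_const)]
      congr 1
      rw [intervalIntegral.integral_const, sub_zero, Complex.real_smul]
      push_cast
      ring
    rw [heq, ← Complex.norm_eq_abs]
    have := intervalIntegral.norm_integral_le_of_norm_le_const
      (C := ε * L) (f := fun w => G (0+w) - ((L:ℝ):ℂ)) (a := 0) (b := L) ?_
    · calc ‖∫ w in (0:ℝ)..L, (G (0+w) - ((L:ℝ):ℂ))‖ ≤ ε * L * |L - 0| := this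
        _ = ε * L^2 := by rw [sub_zero, abs_of_pos hL]; ring
    · intro x hx
      simpa using hGnear x hx
  have hdlow : (1-ε) * L^2 ≤ Complex.abs d := by
    have h1 := aux_lb (((L^2:ℝ):ℂ)) d
    rw [← Complex.abs.map_neg (((L^2:ℝ):ℂ) - d), neg_sub] at h1
    have h2 : Complex.abs (((L^2:ℝ):ℂ)) = L^2 := by
      rw [Complex.abs_ofReal, abs_of_pos (by positivity)]
    nlinarith [hd]
  have hdne : d ≠ 0 := by
    intro hzero
    rw [hzero] at hdlow
    simp at hdlow
    nlinarith
  -- normalized average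
  set h : ℝ → ℂ := fun u => H u / d with hhdef
  have habsd := Complex.abs.pos hdne
  have hβh : ∀ u, Complex.abs (h u - β u) ≤ 2*ε := by
    intro u
    have heq : h u - β u = (H u - β u * d) / d := by
      show H u / d - β u = _
      rw [sub_div, mul_div_assoc, div_self hdne, mul_one]
    rw [heq, map_div₀]
    rw [div_le_iff₀ habsd]
    calc Complex.abs (H u - β u * d) ≤ ε * L^2 := hHval u
      _ ≤ 2*ε * ((1-ε) * L^2) := by
          have hL2 : 0 < L^2 := by positivity
          nlinarith [mul_nonneg (mul_nonneg hε.le hL2.le) (show (0:ℝ) ≤ 1 - 2*ε by linarith)]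
      _ ≤ 2*ε * Complex.abs d := by nlinarith
  have hh0 : h 0 = 1 := by
    rw [hhdef]
    simp only []
    rw [← hddef, div_self hdne]
  have hhub : ∀ u, Complex.abs (h u) ≤ 1 + 3*ε := by
    intro u
    have h1 := hβh u
    have h2 := hβ2 u
    have h3 := aux_lb (h u) (β u)
    linarith
  have hhlb : ∀ u, 1 - 5*ε ≤ Complex.abs (h u) := by
    intro u
    have h1 := hβh u
    have h2 := hβlow u
    have h3 := aux_lb (β u) (h u)
    rw [← Complex.abs.map_neg (β u - h u), neg_sub] at h3
    linarith
  have hhne : ∀ u, h u ≠ 0 := by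
    intro u hzero
    have := hhlb u
    rw [hzero] at this
    simp at this
    linarith
  have hHne : ∀ u, H u ≠ 0 := by
    intro u hzero
    apply hhne u
    rw [hhdef]
    simp [hzero]
  have hhmul : ∀ u v, Complex.abs (h (u+v) - h u * h v) ≤ 11*ε := by
    intro u v
    have e1 : h (u+v) - h u * h v = (h (u+v) - β (u+v)) + (β (u+v) - β u * β v)
        + (β u * (β v - h v) + h v * (β u - h u)) := by ring
    have b1 := hβh (u+v)
    have b2 := hmul u v
    have b3 : Complex.abs (β u * (β v - h v)) ≤ 2 * (2*ε) := by
      rw [Complex.abs.map_mul]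
      have h5 := hβh v
      rw [← Complex.abs.map_neg (h v - β v), neg_sub] at h5
      exact mul_le_mul (hβ2' u) h5 (Complex.abs.nonneg _) (by norm_num)
    have b4 : Complex.abs (h v * (β u - h u)) ≤ 2 * (2*ε) := by
      rw [Complex.abs.map_mul]
      have h5 := hβh u
      rw [← Complex.abs.map_neg (h u - β u), neg_sub] at h5
      have h6 : Complex.abs (h v) ≤ 2 := le_trans (hhub v) (by linarith)
      exact mul_le_mul h6 h5 (Complex.abs.nonneg _) (by norm_num)
    calc Complex.abs (h (u+v) - h u * h v)
        ≤ Complex.abs ((h (u+v) - β (u+v)) + (β (u+v) - β u * β v))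
          + Complex.abs (β u * (β v - h v) + h v * (β u - h u)) := by
          rw [e1]; exact Complex.abs.add_le _ _
      _ ≤ (Complex.abs (h (u+v) - β (u+v)) + Complex.abs (β (u+v) - β u * β v))
          + (Complex.abs (β u * (β v - h v)) + Complex.abs (h v * (β u - h u))) := by
          gcongr <;> exact Complex.abs.add_le _ _
      _ ≤ 11*ε := by linarith
  -- the primitive of G and derivative of H
  have hP2cont : Continuous (fun b => ∫ x in (0:ℝ)..b, G x) :=
    intervalIntegral.continuous_primitive (fun a b => hGcont.intervalIntegrable a b) 0
  have hP2deriv : ∀ u : ℝ, HasDerivAt (fun b => ∫ x in (0:ℝ)..b, G x) (G u) u := by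
    intro u
    exact intervalIntegral.integral_hasDerivAt_right (hGcont.intervalIntegrable 0 u)
      hGcont.stronglyMeasurable.stronglyMeasurableAtFilter hGcont.continuousAt
  have hHalt : ∀ u, H u = (∫ x in (0:ℝ)..(u+L), G x) - ∫ x in (0:ℝ)..u, G x := by
    intro u
    rw [hHdef]
    simp only []
    rw [intervalIntegral.integral_comp_add_left (fun x => G x) u]
    simp only [add_zero]
    rw [← intervalIntegral.integral_interval_sub_left (hGcont.intervalIntegrable 0 (u+L))
      (hGcont.intervalIntegrable 0 u)]
  have hHcont : Continuous H := by
    have : H = fun u => (∫ x in (0:ℝ)..(u+L), G x) - ∫ x in (0:ℝ)..u, G x := funext hHalt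
    rw [this]
    exact (hP2cont.comp (continuous_id.add continuous_const)).sub hP2cont
  have hHderiv : ∀ u, HasDerivAt H (G (u+L) - G u) u := by
    intro u
    have h1 : HasDerivAt (fun x : ℝ => ∫ t in (0:ℝ)..(x+L), G t) (G (u+L)) u := by
      exact HasDerivAt.comp_add_const u L (hP2deriv (u+L))
    have h3 := h1.sub (hP2deriv u)
    have h4 : H = fun u => (∫ x in (0:ℝ)..(u+L), G x) - ∫ x in (0:ℝ)..u, G x := funext hHalt
    rw [h4]
    exact h3
  -- logarithmic derivative
  set φ : ℝ → ℂ := fun u => (G (u+L) - G u) / H u with hφdef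
  have hφcont : Continuous φ :=
    ((hGcont.comp (continuous_id.add continuous_const)).sub hGcont).div hHcont hHne
  set Λ : ℝ → ℂ := fun u => ∫ s in (0:ℝ)..u, φ s with hΛdef
  have hΛ0 : Λ 0 = 0 := by
    rw [hΛdef]
    simp only []
    exact intervalIntegral.integral_same
  have hΛcont : Continuous Λ :=
    intervalIntegral.continuous_primitive (fun a b => hφcont.intervalIntegrable a b) 0
  have hΛderiv : ∀ u, HasDerivAt Λ (φ u) u := by
    intro u
    exact intervalIntegral.integral_hasDerivAt_right (hφcont.intervalIntegrable 0 u)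
      hφcont.stronglyMeasurable.stronglyMeasurableAtFilter hφcont.continuousAt
  have hexp : ∀ u, h u = Complex.exp (Λ u) := by
    have hq : ∀ u : ℝ, HasDerivAt (fun x => H x * Complex.exp (-Λ x)) 0 u := by
      intro u
      have h1 := (hHderiv u).mul (((hΛderiv u).neg).cexp)
      have h2 : G (u+L) - G u = φ u * H u := by
        rw [hφdef]
        exact (div_mul_cancel₀ _ (hHne u)).symm
      refine h1.congr_deriv ?_
      rw [h2]
      ring
    have hconst : ∀ u : ℝ, H u * Complex.exp (-Λ u) = d := by
      intro u
      have := is_const_of_deriv_eq_zero (f := fun x => H x * Complex.exp (-Λ x))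
        (fun x => ((hq x).differentiableAt)) (fun x => (hq x).deriv) u 0
      rw [this, hΛ0]
      simp [← hddef]
    intro u
    have h5 := hconst u
    have h6 : H u = d * Complex.exp (Λ u) := by
      have := congrArg (fun z => z * Complex.exp (Λ u)) h5
      rw [mul_assoc, ← Complex.exp_add] at this
      simpa using this
    rw [hhdef]
    simp only []
    rw [h6]
    field_simp
  have hHlb : ∀ u, L^2/2 ≤ Complex.abs (H u) := by
    intro u
    have h1 : Complex.abs (H u) = Complex.abs (h u) * Complex.abs d := by
      rw [hhdef]
      simp only []
      rw [map_div₀]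
      field_simp
    rw [h1]
    have h2 := hhlb u
    have hL2 : 0 < L^2 := by positivity
    calc L^2/2 ≤ (1 - 5*ε) * ((1-ε) * L^2) := by
          nlinarith [mul_nonneg hL2.le (show (0:ℝ) ≤ 1/2 - 6*ε by linarith),
            mul_nonneg (mul_nonneg hε.le hε.le) hL2.le]
      _ ≤ Complex.abs (h u) * Complex.abs d := by
          apply mul_le_mul h2 hdlow (mul_nonneg (by linarith) hL2.le)
            (by linarith [hhlb u])
  have hφbound : ∀ u, Complex.abs (φ u) ≤ 32/ε := by
    intro u
    rw [hφdef]
    simp only []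
    rw [map_div₀]
    have h1 : Complex.abs (G (u+L) - G u) ≤ 4*L := by
      calc Complex.abs (G (u+L) - G u) ≤ Complex.abs (G (u+L)) + Complex.abs (G u) := by
            simpa [Complex.norm_eq_abs] using norm_sub_le (G (u+L)) (G u)
        _ ≤ 4*L := by linarith [hGbound (u+L), hGbound u]
    have h2 := hHlb u
    have hL2 : 0 < L^2/2 := by positivity
    calc Complex.abs (G (u+L) - G u) / Complex.abs (H u) ≤ 4*L / (L^2/2) := by
          apply div_le_div₀ (by positivity) h1 hL2 h2
      _ = 32/ε := by rw [hLdef]; field_simp; ring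
  have hΛlip : ∀ u v : ℝ, Complex.abs (Λ u - Λ v) ≤ (32/ε) * |u - v| := by
    intro u v
    have heq : Λ u - Λ v = ∫ s in v..u, φ s := by
      rw [hΛdef]
      simp only []
      rw [intervalIntegral.integral_interval_sub_left (hφcont.intervalIntegrable 0 u)
        (hφcont.intervalIntegrable 0 v)]
    rw [heq, ← Complex.norm_eq_abs]
    have := intervalIntegral.norm_integral_le_of_norm_le_const (C := 32/ε)
      (f := φ) (a := v) (b := u) (fun x _ => by rw [Complex.norm_eq_abs]; exact hφbound x)
    exact this
  -- approximate additivity of Λ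
  have hewm1 : ∀ u v : ℝ, Complex.abs (Complex.exp (Λ (u+v) - Λ u - Λ v) - 1) ≤ 22*ε := by
    intro u v
    have hprod : Complex.exp (Λ (u+v) - Λ u - Λ v) - 1
        = (h (u+v) - h u * h v) / (h u * h v) := by
      rw [Complex.exp_sub, Complex.exp_sub, ← hexp (u+v), ← hexp u, ← hexp v]
      rw [div_div]
      rw [div_sub_one (mul_ne_zero (hhne u) (hhne v))]
    rw [hprod, map_div₀]
    have hlb : 1/2 ≤ Complex.abs (h u * h v) := by
      rw [Complex.abs.map_mul]
      calc (1:ℝ)/2 ≤ (1-5*ε) * (1-5*ε) := by nlinarith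
        _ ≤ Complex.abs (h u) * Complex.abs (h v) :=
            mul_le_mul (hhlb u) (hhlb v) (by linarith) (by linarith [hhlb u])
    rw [div_le_iff₀ (by linarith)]
    calc Complex.abs (h (u+v) - h u * h v) ≤ 11*ε := hhmul u v
      _ ≤ 22*ε * (1/2) := by linarith
      _ ≤ 22*ε * Complex.abs (h u * h v) := by
          apply mul_le_mul_of_nonneg_left hlb (by linarith)
  have hReD : ∀ u v : ℝ, |(Λ (u+v) - Λ u - Λ v).re| ≤ 44*ε := by
    intro u v
    have := aux_re (Λ (u+v) - Λ u - Λ v) (22*ε) (by linarith) (by linarith) (hewm1 u v)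
    linarith
  have hImE : ∀ u v : ℝ, Complex.abs (Complex.exp (((Λ (u+v) - Λ u - Λ v).im : ℝ) * Complex.I) - 1) ≤ 110*ε := by
    intro u v
    set w : ℂ := Λ (u+v) - Λ u - Λ v with hw
    have hsplit : Complex.exp w = Complex.exp ((w.re : ℝ)) * Complex.exp ((w.im : ℝ) * Complex.I) := by
      rw [← Complex.exp_add]
      congr 1
      exact (Complex.re_add_im w).symm
    have h1 : Complex.abs (Complex.exp ((w.im : ℝ) * Complex.I) - Complex.exp w) ≤ 88*ε := by
      have heq2 : Complex.exp ((w.im : ℝ) * Complex.I) - Complex.exp w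
          = Complex.exp ((w.im : ℝ) * Complex.I) * (1 - Complex.exp ((w.re : ℝ))) := by
        rw [hsplit]; ring
      rw [heq2, Complex.abs.map_mul]
      have h3 : Complex.abs (Complex.exp ((w.im : ℝ) * Complex.I)) = 1 := by
        rw [Complex.abs_exp]
        simp
      rw [h3, one_mul]
      have h4 : Complex.exp ((w.re : ℝ)) = ((Real.exp w.re : ℝ) : ℂ) := by
        rw [Complex.ofReal_exp]
      rw [h4]
      have h5 : Complex.abs (1 - ((Real.exp w.re : ℝ) : ℂ)) = |Real.exp w.re - 1| := by
        rw [← Complex.abs.map_neg, neg_sub]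
        rw [show ((Real.exp w.re : ℝ) : ℂ) - 1 = (((Real.exp w.re - 1 : ℝ)) : ℂ) by push_cast; ring]
        exact Complex.abs_ofReal _
      rw [h5]
      have h6 : |w.re| ≤ 1 := by
        have := hReD u v
        rw [← hw] at this
        linarith
      calc |Real.exp w.re - 1| ≤ 2 * |w.re| := Real.abs_exp_sub_one_le h6
        _ ≤ 88*ε := by
            have := hReD u v
            rw [← hw] at this
            linarith
    calc Complex.abs (Complex.exp ((w.im : ℝ) * Complex.I) - 1)
        ≤ Complex.abs (Complex.exp ((w.im : ℝ) * Complex.I) - Complex.exp w)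
          + Complex.abs (Complex.exp w - 1) := Complex.abs.sub_le _ _ _
      _ ≤ 110*ε := by linarith [hewm1 u v]
  have hImNear : ∀ u v : ℝ, ∃ k : ℤ, |(Λ (u+v) - Λ u - Λ v).im - 2*Real.pi*k| ≤ 220*ε := by
    intro u v
    obtain ⟨k, hk⟩ := aux_angle ((Λ (u+v) - Λ u - Λ v).im)
    refine ⟨k, le_trans hk ?_⟩
    have h1 := hImE u v
    have h2 : Real.pi / 2 ≤ 2 := by linarith [Real.pi_le_four]
    calc Real.pi/2 * Complex.abs (Complex.exp (((Λ (u+v) - Λ u - Λ v).im : ℝ) * Complex.I) - 1)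
        ≤ 2 * (110*ε) := mul_le_mul h2 h1 (Complex.abs.nonneg _) (by norm_num)
      _ = 220*ε := by ring
  have hImD : ∀ u v : ℝ, |(Λ (u+v) - Λ u - Λ v).im| ≤ 220*ε := by
    intro u v
    set ψ : ℝ → ℝ := fun x => (Λ (u+x) - Λ u - Λ x).im with hψ
    have hψcont : Continuous ψ := by
      apply Complex.continuous_im.comp
      exact ((hΛcont.comp (continuous_const.add continuous_id)).sub continuous_const).sub hΛcont
    have hψ0 : ψ 0 = 0 := by
      rw [hψ]
      simp [hΛ0]
    have hsmall : ∀ x, |ψ x| ≤ 1 → |ψ x| ≤ 220*ε := by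
      intro x hx
      obtain ⟨k, hk⟩ := hImNear u x
      rcases eq_or_ne k 0 with rfl | hkne
      · simpa [hψ] using hk
      · exfalso
        have hk1 : (1:ℝ) ≤ |(k:ℝ)| := by
          rw [← Int.cast_abs]
          exact_mod_cast Int.one_le_abs hkne
        have hπ := Real.pi_gt_three
        have : |2*Real.pi*k| - |ψ x| ≤ |ψ x - 2*Real.pi*k| := by
          rw [abs_sub_comm]
          exact (abs_sub_abs_le_abs_sub _ _)
        have h2 : 2*Real.pi ≤ |2*Real.pi*k| := by
          rw [abs_mul, abs_of_pos (by linarith : (0:ℝ) < 2*Real.pi)]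
          nlinarith
        rw [hψ] at hx
        simp only [] at hx hk this
        nlinarith
    have hS : {x : ℝ | |ψ x| ≤ 1} = Set.univ := by
      have hopen : {x : ℝ | |ψ x| ≤ 1} = (fun x => |ψ x|) ⁻¹' Set.Iio 1 := by
        ext x
        constructor
        · intro hx
          have := hsmall x hx
          simp only [Set.mem_preimage, Set.mem_Iio]
          calc |ψ x| ≤ 220*ε := this
            _ < 1 := by linarith
        · intro hx
          simp only [Set.mem_preimage, Set.mem_Iio] at hx
          exact hx.le
      have hclosed : IsClosed {x : ℝ | |ψ x| ≤ 1} := by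
        have : {x : ℝ | |ψ x| ≤ 1} = (fun x => |ψ x|) ⁻¹' Set.Iic 1 := rfl
        rw [this]
        exact IsClosed.preimage (continuous_abs.comp hψcont) isClosed_Iic
      have hclopen : IsClopen {x : ℝ | |ψ x| ≤ 1} := by
        constructor
        · exact hclosed
        · rw [hopen]
          exact IsOpen.preimage (continuous_abs.comp hψcont) isOpen_Iio
      exact hclopen.eq_univ ⟨0, by simp [hψ0]⟩
    have hv : v ∈ {x : ℝ | |ψ x| ≤ 1} := by rw [hS]; trivial
    exact hsmall v hv
  have hD : ∀ u v : ℝ, Complex.abs (Λ (u+v) - Λ u - Λ v) ≤ 264*ε := by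
    intro u v
    calc Complex.abs (Λ (u+v) - Λ u - Λ v)
        ≤ |(Λ (u+v) - Λ u - Λ v).re| + |(Λ (u+v) - Λ u - Λ v).im| :=
          Complex.abs_le_abs_re_add_abs_im _
      _ ≤ 264*ε := by linarith [hReD u v, hImD u v]
  -- Hyers-Ulam : extract the linear part
  have key : ∀ u : ℝ, ∃ zz : ℂ,
      Tendsto (fun n : ℕ => Λ (2^n * u) / ((2:ℂ)^n)) atTop (nhds zz) := by
    intro u
    have hcs : CauchySeq (fun n : ℕ => Λ (2^n * u) / ((2:ℂ)^n)) := by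
      apply cauchySeq_of_le_geometric (r := 1/2) (C := 264*ε) (by norm_num)
      intro n
      rw [dist_eq_norm]
      have heq : Λ (2^n*u)/((2:ℂ)^n) - Λ (2^(n+1)*u)/((2:ℂ)^(n+1))
          = -((Λ (2^n*u + 2^n*u) - Λ (2^n*u) - Λ (2^n*u)) / ((2:ℂ)^(n+1))) := by
        have harg : (2:ℝ)^(n+1) * u = 2^n*u + 2^n*u := by ring
        rw [harg]
        have h2ne : ((2:ℂ)^(n+1)) ≠ 0 := pow_ne_zero _ two_ne_zero
        have h2ne' : ((2:ℂ)^n) ≠ 0 := pow_ne_zero _ two_ne_zero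
        field_simp
        ring
      rw [heq, norm_neg, norm_div]
      have hnorm2 : ‖((2:ℂ)^(n+1))‖ = 2^(n+1) := by
        rw [norm_pow]
        norm_num
      rw [hnorm2]
      rw [div_le_iff₀ (by positivity)]
      have hb := hD (2^n*u) (2^n*u)
      rw [← Complex.norm_eq_abs] at hb
      calc ‖Λ (2^n*u + 2^n*u) - Λ (2^n*u) - Λ (2^n*u)‖ ≤ 264*ε := hb
        _ ≤ 264*ε * ((1/2)^n * 2^(n+1)) := by
            have : (1/2:ℝ)^n * 2^(n+1) = 2 := by
              rw [div_pow, one_pow, pow_succ]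
              field_simp
            rw [this]
            linarith
        _ = 264*ε * (1/2)^n * 2^(n+1) := by ring
    exact cauchySeq_tendsto_of_complete hcs
  choose A hA using key
  have hAΛ : ∀ u, Complex.abs (A u - Λ u) ≤ 264*ε := by
    intro u
    have hstep : ∀ n : ℕ, ‖Λ (2^n * u) / ((2:ℂ)^n) - Λ u‖ ≤ 264*ε * (1 - (1/2)^n) := by
      intro n
      induction n with
      | zero => simp
      | succ n ih =>
        have h1 : ‖Λ (2^(n+1) * u) / ((2:ℂ)^(n+1)) - Λ (2^n * u) / ((2:ℂ)^n)‖
            ≤ 264*ε * (1/2)^(n+1) := by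
          have heq : Λ (2^(n+1)*u)/((2:ℂ)^(n+1)) - Λ (2^n*u)/((2:ℂ)^n)
              = (Λ (2^n*u + 2^n*u) - Λ (2^n*u) - Λ (2^n*u)) / ((2:ℂ)^(n+1)) := by
            have harg : (2:ℝ)^(n+1) * u = 2^n*u + 2^n*u := by ring
            rw [harg]
            have h2ne : ((2:ℂ)^(n+1)) ≠ 0 := pow_ne_zero _ two_ne_zero
            have h2ne' : ((2:ℂ)^n) ≠ 0 := pow_ne_zero _ two_ne_zero
            field_simp
            try ring
          rw [heq, norm_div]
          have hnorm2 : ‖((2:ℂ)^(n+1))‖ = 2^(n+1) := by rw [norm_pow]; norm_num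
          rw [hnorm2, div_le_iff₀ (by positivity)]
          have hb := hD (2^n*u) (2^n*u)
          rw [← Complex.norm_eq_abs] at hb
          calc ‖Λ (2^n*u + 2^n*u) - Λ (2^n*u) - Λ (2^n*u)‖ ≤ 264*ε := hb
            _ ≤ 264*ε * ((1/2)^(n+1) * 2^(n+1)) := by
                have : (1/2:ℝ)^(n+1) * 2^(n+1) = 1 := by
                  rw [div_pow, one_pow]
                  field_simp
                rw [this, mul_one]
            _ = 264*ε * (1/2)^(n+1) * 2^(n+1) := by ring
        calc ‖Λ (2^(n+1) * u) / ((2:ℂ)^(n+1)) - Λ u‖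
            ≤ ‖Λ (2^(n+1) * u) / ((2:ℂ)^(n+1)) - Λ (2^n * u) / ((2:ℂ)^n)‖
              + ‖Λ (2^n * u) / ((2:ℂ)^n) - Λ u‖ := by
              simpa using norm_sub_le_norm_sub_add_norm_sub
                (Λ (2^(n+1) * u) / ((2:ℂ)^(n+1))) (Λ (2^n * u) / ((2:ℂ)^n)) (Λ u)
          _ ≤ 264*ε * (1/2)^(n+1) + 264*ε * (1 - (1/2)^n) := by linarith
          _ = 264*ε * (1 - (1/2)^(n+1)) := by ring
    have hlim : Tendsto (fun n : ℕ => ‖Λ (2^n * u) / ((2:ℂ)^n) - Λ u‖)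
        atTop (nhds ‖A u - Λ u‖) := ((hA u).sub tendsto_const_nhds).norm
    rw [← Complex.norm_eq_abs]
    apply le_of_tendsto hlim
    filter_upwards with n
    calc ‖Λ (2^n * u) / ((2:ℂ)^n) - Λ u‖ ≤ 264*ε * (1 - (1/2)^n) := hstep n
      _ ≤ 264*ε := by
          have h1 : (0:ℝ) ≤ (1/2:ℝ)^n := by positivity
          nlinarith
  have hAadd : ∀ u v : ℝ, A (u+v) = A u + A v := by
    intro u v
    have h1 : Tendsto (fun n : ℕ => Λ (2^n * (u+v)) / ((2:ℂ)^n)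
        - Λ (2^n * u) / ((2:ℂ)^n) - Λ (2^n * v) / ((2:ℂ)^n))
        atTop (nhds (A (u+v) - A u - A v)) := ((hA (u+v)).sub (hA u)).sub (hA v)
    have h2 : Tendsto (fun n : ℕ => Λ (2^n * (u+v)) / ((2:ℂ)^n)
        - Λ (2^n * u) / ((2:ℂ)^n) - Λ (2^n * v) / ((2:ℂ)^n)) atTop (nhds 0) := by
      have hgz : Tendsto (fun n : ℕ => 264*ε * (1/2)^n) atTop (nhds 0) := by
        have := tendsto_pow_atTop_nhds_zero_of_lt_one
          (by norm_num : (0:ℝ) ≤ 1/2) (by norm_num : (1/2:ℝ) < 1)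
        simpa using this.const_mul (264*ε)
      refine squeeze_zero_norm ?_ hgz
      · intro n
        have heq : Λ (2^n * (u+v)) / ((2:ℂ)^n) - Λ (2^n * u) / ((2:ℂ)^n)
            - Λ (2^n * v) / ((2:ℂ)^n)
            = (Λ (2^n*u + 2^n*v) - Λ (2^n*u) - Λ (2^n*v)) / ((2:ℂ)^n) := by
          have harg : (2:ℝ)^n * (u+v) = 2^n*u + 2^n*v := by ring
          rw [harg]
          have h2ne : ((2:ℂ)^n) ≠ 0 := pow_ne_zero _ two_ne_zero
          field_simp
        rw [heq, norm_div]
        have hnorm2 : ‖((2:ℂ)^n)‖ = 2^n := by rw [norm_pow]; norm_num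
        rw [hnorm2, div_le_iff₀ (by positivity)]
        have hb := hD (2^n*u) (2^n*v)
        rw [← Complex.norm_eq_abs] at hb
        calc ‖Λ (2^n*u + 2^n*v) - Λ (2^n*u) - Λ (2^n*v)‖ ≤ 264*ε := hb
          _ ≤ 264*ε * ((1/2)^n * 2^n) := by
              have : (1/2:ℝ)^n * 2^n = 1 := by
                rw [div_pow, one_pow]
                field_simp
              rw [this, mul_one]
          _ = 264*ε * (1/2)^n * 2^n := by ring
    have h3 := tendsto_nhds_unique h1 h2
    have h4 : A (u+v) - A u - A v = 0 := h3
    linear_combination h4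
  have hAcont : Continuous A := by
    have hAlip : ∀ u v : ℝ, dist (A u) (A v) ≤ (32/ε) * dist u v := by
      intro u v
      rw [dist_eq_norm, Real.dist_eq]
      have hlim : Tendsto (fun n : ℕ => ‖Λ (2^n * u) / ((2:ℂ)^n) - Λ (2^n * v) / ((2:ℂ)^n)‖)
          atTop (nhds ‖A u - A v‖) := ((hA u).sub (hA v)).norm
      apply le_of_tendsto hlim
      filter_upwards with n
      have heq : Λ (2^n * u) / ((2:ℂ)^n) - Λ (2^n * v) / ((2:ℂ)^n)
          = (Λ (2^n*u) - Λ (2^n*v)) / ((2:ℂ)^n) := by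
        have h2ne : ((2:ℂ)^n) ≠ 0 := pow_ne_zero _ two_ne_zero
        field_simp
      rw [heq, norm_div]
      have hnorm2 : ‖((2:ℂ)^n)‖ = 2^n := by rw [norm_pow]; norm_num
      rw [hnorm2, div_le_iff₀ (by positivity)]
      have hb := hΛlip (2^n*u) (2^n*v)
      rw [← Complex.norm_eq_abs] at hb
      calc ‖Λ (2^n*u) - Λ (2^n*v)‖ ≤ 32/ε * |2^n*u - 2^n*v| := hb
        _ = 32/ε * |u - v| * 2^n := by
            rw [show (2:ℝ)^n*u - 2^n*v = 2^n * (u - v) by ring, abs_mul,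
              abs_of_pos (by positivity : (0:ℝ) < (2:ℝ)^n)]
            ring
    have : LipschitzWith (Real.toNNReal (32/ε)) A := by
      apply LipschitzWith.of_dist_le_mul
      intro u v
      rw [Real.coe_toNNReal _ (by positivity)]
      exact hAlip u v
    exact this.continuous
  set Ahom : ℝ →+ ℂ := AddMonoidHom.mk' A hAadd with hAhom
  have hAlin : ∀ u : ℝ, A u = (u:ℂ) * A 1 := by
    intro u
    have h1 := (Ahom.toRealLinearMap hAcont).map_smul u (1:ℝ)
    simp only [smul_eq_mul, mul_one] at h1
    have h2 : (Ahom.toRealLinearMap hAcont) u = A u := rfl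
    have h3 : (Ahom.toRealLinearMap hAcont) (1:ℝ) = A 1 := rfl
    rw [h2, h3] at h1
    rw [h1, Complex.real_smul]
  set z : ℂ := A 1 with hz
  have hzΛ : ∀ u : ℝ, Complex.abs (Λ u - (u:ℂ) * z) ≤ 264*ε := by
    intro u
    have := hAΛ u
    rw [← hAlin u]
    rw [← Complex.abs.map_neg (A u - Λ u), neg_sub] at this
    exact this
  -- the real part of z vanishes
  have hReΛ : ∀ u, |(Λ u).re| ≤ 10*ε := by
    intro u
    have h1 : Complex.abs (h u) = Real.exp ((Λ u).re) := by
      rw [hexp u, Complex.abs_exp]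
    have h2 : Real.exp ((Λ u).re) ≤ 1 + 3*ε := by rw [← h1]; exact hhub u
    have h3 : 1 - 5*ε ≤ Real.exp ((Λ u).re) := by rw [← h1]; exact hhlb u
    have hup : (Λ u).re ≤ 3*ε := by
      have : Real.exp ((Λ u).re) ≤ Real.exp (3*ε) :=
        le_trans h2 (by linarith [Real.add_one_le_exp (3*ε)])
      exact Real.exp_le_exp.mp this
    have hlo : -(10*ε) ≤ (Λ u).re := by
      have hkey : Real.exp (-(10*ε)) ≤ 1 - 5*ε := by
        have ha := Real.add_one_le_exp (10*ε)
        have hb : Real.exp (-(10*ε)) = 1 / Real.exp (10*ε) := by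
          rw [Real.exp_neg]; ring
        rw [hb, div_le_iff₀ (Real.exp_pos _)]
        nlinarith [Real.exp_pos (10*ε)]
      have := le_trans hkey h3
      exact Real.exp_le_exp.mp this
    rw [abs_le]
    constructor <;> linarith
  have hzre : z.re = 0 := by
    by_contra hne
    have hb : ∀ u : ℝ, |u * z.re| ≤ 274*ε := by
      intro u
      have h1 : |(Λ u - (u:ℂ)*z).re| ≤ 264*ε := by
        calc |(Λ u - (u:ℂ)*z).re| ≤ Complex.abs (Λ u - (u:ℂ)*z) := Complex.abs_re_le_abs _
          _ ≤ 264*ε := hzΛ u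
      have h2 : ((u:ℂ)*z).re = u * z.re := by
        simp
      have h3 : (Λ u - (u:ℂ)*z).re = (Λ u).re - u * z.re := by
        rw [Complex.sub_re, h2]
      rw [h3] at h1
      have h4 := hReΛ u
      rw [abs_le] at h1 h4 ⊢
      constructor <;> [linarith [h1.1, h4.2]; linarith [h1.2, h4.1]]
    have hzre' : 0 < |z.re| := abs_pos.mpr hne
    have := hb (275*ε/|z.re|)
    rw [abs_mul, abs_div, _root_.abs_abs] at this
    have heq : |275*ε| / |z.re| * |z.re| = |275*ε| := by
      field_simp
    rw [heq] at this
    rw [abs_of_pos (by linarith : (0:ℝ) < 275*ε)] at this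
    linarith
  -- conclusion
  refine ⟨-z.im, fun u => ?_⟩
  have hzval : -(Complex.I * ((-z.im : ℝ) : ℂ) * (u:ℝ)) = (u:ℂ) * z := by
    apply Complex.ext <;> simp [hzre] <;> ring
  rw [hzval]
  have habs1 : Complex.abs (Complex.exp ((u:ℂ) * z)) = 1 := by
    rw [Complex.abs_exp]
    have : ((u:ℂ)*z).re = u * z.re := by simp
    rw [this, hzre]
    simp
  have h1 : Complex.abs (Complex.exp (Λ u) - Complex.exp ((u:ℂ) * z)) ≤ 2 * (264*ε) := by
    have heq : Complex.exp (Λ u) - Complex.exp ((u:ℂ) * z)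
        = Complex.exp ((u:ℂ) * z) * (Complex.exp (Λ u - (u:ℂ)*z) - 1) := by
      rw [mul_sub, mul_one, ← Complex.exp_add]
      ring_nf
    rw [heq, Complex.abs.map_mul, habs1, one_mul]
    have hsmall : Complex.abs (Λ u - (u:ℂ)*z) ≤ 1 := by
      calc Complex.abs (Λ u - (u:ℂ)*z) ≤ 264*ε := hzΛ u
        _ ≤ 1 := by linarith
    calc Complex.abs (Complex.exp (Λ u - (u:ℂ)*z) - 1)
        ≤ 2 * Complex.abs (Λ u - (u:ℂ)*z) := Complex.abs_exp_sub_one_le hsmall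
      _ ≤ 2 * (264*ε) := by linarith [hzΛ u]
  calc Complex.abs (β u - Complex.exp ((u:ℂ)*z))
      ≤ Complex.abs (β u - h u) + Complex.abs (h u - Complex.exp ((u:ℂ)*z)) :=
        Complex.abs.sub_le _ _ _
    _ ≤ 2*ε + 2*(264*ε) := by
        have h2 := hβh u
        rw [← Complex.abs.map_neg (h u - β u), neg_sub] at h2
        have h3 : Complex.abs (h u - Complex.exp ((u:ℂ)*z)) ≤ 2*(264*ε) := by
          rw [hexp u]
          exact h1
        linarith
    _ ≤ 1000*ε := by linarith
/-- Stability of Archimedean characters: a measurable approximate homomorphism on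
`(0,∞)` that is approximately `1` near `1` is uniformly close to `x ↦ x^{-it}`. -/
theorem stmt1 (C : ℝ) (hC : 0 < C) :
    ∃ ε₀ > (0:ℝ), ∃ C' > (0:ℝ), ∀ ε : ℝ, 0 < ε → ε ≤ ε₀ →
      ∀ α : ℝ → ℂ, Measurable α →
        (∀ x : ℝ, 0 < x → ‖α x‖ ≤ C) →
        (∀ x : ℝ, |x - 1| ≤ ε → ‖α x - 1‖ ≤ ε) →
        (∀ x y : ℝ, 0 < x → 0 < y → ‖α (x * y) - α x * α y‖ ≤ ε) →
        ∃ t : ℝ, ∀ x : ℝ, 0 < x →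
          ‖α x - Complex.exp (-(Complex.I * t * Real.log x))‖ ≤ C' * ε := by
  refine ⟨1/100000, by norm_num, 1000, by norm_num, ?_⟩
  intro ε hε hε' α hαmeas hαbound hαnear hαmul
  obtain ⟨t, ht⟩ := aux_additive C ε hC hε hε' (fun u => α (Real.exp u))
    (hαmeas.comp Real.measurable_exp)
    (fun u => hαbound _ (Real.exp_pos u))
    (fun u hu => by
      apply hαnear
      have h1 : |u| ≤ 1 := by
        calc |u| ≤ ε/2 := hu
          _ ≤ 1 := by linarith
      calc |Real.exp u - 1| ≤ 2*|u| := Real.abs_exp_sub_one_le h1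
        _ ≤ ε := by linarith [hu])
    (fun u v => by
      have h2 := hαmul (Real.exp u) (Real.exp v) (Real.exp_pos u) (Real.exp_pos v)
      rw [← Real.exp_add] at h2
      exact h2)
  refine ⟨t, fun x hx => ?_⟩
  have h3 := ht (Real.log x)
  rw [Real.exp_log hx] at h3
  calc Complex.abs (α x - Complex.exp (-(Complex.I * t * Real.log x))) ≤ 1000*ε := h3
    _ = 1000 * ε := by ring
end

section
/- Let χ̃ : (0,∞) → S¹ be a group homomorphism from the multiplicative group of positive reals to the unit circle such that |χ̃(x) − 1| ≤ ε whenever |x − 1| ≤ ε, for some 0 < ε < 1/10. Then there exists a real number t with |t| = O(1) such that χ̃(x) = x^{it} for all x > 0. -/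
open Complex Real

lemma abs_expI_sub_one (θ : ℝ) :
    ‖Complex.exp (θ * Complex.I) - 1‖ = 2 * |Real.sin (θ/2)| := by
  have h1 : ‖Complex.exp (θ * Complex.I) - 1‖ ^ 2 = 2 - 2 * Real.cos θ := by
    rw [← Complex.normSq_eq_norm_sq, Complex.normSq_apply]
    simp [Complex.exp_ofReal_mul_I_re, Complex.exp_ofReal_mul_I_im]
    nlinarith [Real.sin_sq_add_cos_sq θ]
  have h2 : (2 * |Real.sin (θ/2)|) ^ 2 = 2 - 2 * Real.cos θ := by
    rw [mul_pow, _root_.sq_abs]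
    have := Real.sin_sq_eq_half_sub (θ/2)
    rw [show 2 * (θ/2) = θ by ring] at this
    nlinarith
  have h3 : (0:ℝ) ≤ 2 * |Real.sin (θ/2)| := by positivity
  nlinarith [norm_nonneg (Complex.exp (θ * Complex.I) - 1)]

lemma abs_sin_half (θ : ℝ) (h : |θ| ≤ π) : |Real.sin (θ/2)| = Real.sin (|θ|/2) := by
  rcases le_or_gt 0 θ with h0 | h0
  · rw [_root_.abs_of_nonneg h0, _root_.abs_of_nonneg]
    apply Real.sin_nonneg_of_nonneg_of_le_pi (by linarith)
    rw [_root_.abs_of_nonneg h0] at h; linarith [Real.pi_pos]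
  · rw [_root_.abs_of_neg h0]
    rw [_root_.abs_of_neg h0] at h
    rw [show θ/2 = -(-θ/2) by ring, Real.sin_neg, abs_neg, _root_.abs_of_nonneg]
    apply Real.sin_nonneg_of_nonneg_of_le_pi (by linarith)
    linarith [Real.pi_pos]

lemma expI_lower (θ : ℝ) (h : |θ| ≤ π) :
    2/π * |θ| ≤ ‖Complex.exp (θ * Complex.I) - 1‖ := by
  rw [abs_expI_sub_one, abs_sin_half θ h]
  have := Real.mul_le_sin (x := |θ|/2) (by positivity) (by linarith)
  calc 2/π * |θ| = 2 * (2/π * (|θ|/2)) := by ring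
  _ ≤ 2 * Real.sin (|θ|/2) := by linarith

lemma expI_upper (θ : ℝ) :
    ‖Complex.exp (θ * Complex.I) - 1‖ ≤ |θ| := by
  rw [abs_expI_sub_one]
  have := Real.abs_sin_le_abs (x := θ/2)
  rw [abs_div] at this
  simp at this
  linarith

lemma exp_near (s : ℝ) (h : |s| ≤ 1/2) : |Real.exp s - 1| ≤ 2 * |s| := by
  rcases le_or_gt 0 s with h0 | h0
  · rw [_root_.abs_of_nonneg h0] at h ⊢
    have h1 : 1 - s ≤ Real.exp (-s) := by linarith [Real.add_one_le_exp (-s)]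
    rw [Real.exp_neg] at h1
    have h2 : 0 < Real.exp s := Real.exp_pos s
    have h3 : (1 - s) * Real.exp s ≤ 1 := by
      rw [← mul_le_mul_iff_left₀ h2] at h1
      calc (1-s) * Real.exp s ≤ (Real.exp s)⁻¹ * Real.exp s := by nlinarith
      _ = 1 := by field_simp
    have h4 : 1 + s ≤ Real.exp s := by linarith [Real.add_one_le_exp s]
    rw [_root_.abs_of_nonneg (by linarith)]
    nlinarith
  · rw [_root_.abs_of_neg h0] at h ⊢
    have h4 : 1 + s ≤ Real.exp s := by linarith [Real.add_one_le_exp s]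
    have h5 : Real.exp s < 1 := by
      rw [← Real.exp_zero]; exact Real.exp_lt_exp.mpr h0
    rw [_root_.abs_of_neg (by linarith)]
    linarith

lemma small_of_jordan {x ε : ℝ} (h : 2/π * x ≤ ε) : x ≤ π * ε / 2 := by
  rw [div_mul_eq_mul_div, div_le_iff₀ Real.pi_pos] at h; linarith

lemma real_pow_close {ε : ℝ} (hε : 0 < ε) (hε' : ε < 1/10) {n k : ℕ} (hn : 1 ≤ n)
    (hk : k ≤ n) {y : ℝ} (hy : 0 < y) (h : |y - 1| ≤ ε/(2*n)) : |y^k - 1| ≤ ε := by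
  have hn0 : (0:ℝ) < n := by exact_mod_cast hn
  have hn1 : (1:ℝ) ≤ n := by exact_mod_cast hn
  set a : ℝ := ε/(2*n) with ha
  have ha0 : 0 < a := by positivity
  have han : (n:ℝ) * a = ε/2 := by rw [ha]; field_simp
  have hka : (k:ℝ) * a ≤ ε/2 := by
    rw [← han]
    have : (k:ℝ) ≤ n := by exact_mod_cast hk
    nlinarith
  have haε : a ≤ ε/2 := by
    rw [ha, div_le_div_iff₀ (by positivity) (by norm_num)]
    nlinarith [mul_le_mul_of_nonneg_left hn1 hε.le]
  have hdn : |y - 1| ≤ a := h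
  rw [abs_le] at hdn
  have hup : y^k ≤ 1 + ε := by
    calc y^k ≤ (1+a)^k := pow_le_pow_left₀ hy.le (by linarith) k
    _ ≤ (Real.exp a)^k := pow_le_pow_left₀ (by linarith) (by linarith [Real.add_one_le_exp a]) k
    _ = Real.exp (k * a) := by rw [← Real.exp_nat_mul]
    _ ≤ Real.exp (ε/2) := Real.exp_le_exp.mpr hka
    _ ≤ 1 + ε := by
        have h1 : 1 - ε/2 ≤ Real.exp (-(ε/2)) := by linarith [Real.add_one_le_exp (-(ε/2))]
        rw [Real.exp_neg] at h1
        have h2 : 0 < Real.exp (ε/2) := Real.exp_pos _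
        have h3 : (1 - ε/2) * Real.exp (ε/2) ≤ 1 := by
          calc (1-ε/2) * Real.exp (ε/2) ≤ (Real.exp (ε/2))⁻¹ * Real.exp (ε/2) := by nlinarith
          _ = 1 := by field_simp
        nlinarith
  have hlo : 1 - ε ≤ y^k := by
    have hb : (1:ℝ) + k * (-a) ≤ (1 + (-a))^k := by
      apply one_add_mul_le_pow; nlinarith
    calc 1 - ε ≤ 1 + (k:ℝ) * (-a) := by
          have : (k:ℝ) * a ≤ ε/2 := hka
          nlinarith
    _ ≤ (1 - a)^k := by rw [show (1:ℝ) + -a = 1 - a by ring] at hb; exact hb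
    _ ≤ y^k := pow_le_pow_left₀ (by linarith) (by linarith) k
  rw [abs_le]; constructor <;> linarith

lemma zpow_small {ε : ℝ} (hε : 0 < ε) (hε' : ε < 1/10) {z : ℂ} (hz : ‖z‖ = 1)
    {n : ℕ} (hn : 1 ≤ n) (h : ∀ k : ℕ, 1 ≤ k → k ≤ n → ‖z ^ k - 1‖ ≤ ε) :
    |Complex.arg z| ≤ π * ε / (2 * n) := by
  have hπ := Real.pi_pos
  set θ : ℝ := Complex.arg z with hθ
  have hzexp : z = Complex.exp (θ * Complex.I) := by
    have := Complex.norm_mul_exp_arg_mul_I z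
    rw [hz] at this; simpa using this.symm
  have hzk : ∀ k : ℕ, z ^ k = Complex.exp (((k:ℝ) * θ) * Complex.I) := by
    intro k
    rw [hzexp, ← Complex.exp_nat_mul]
    congr 1; push_cast; ring
  have hθπ : |θ| ≤ π := Complex.abs_arg_le_pi z
  have hbase : |θ| ≤ π * ε / 2 := by
    have h1 := h 1 le_rfl hn
    rw [hzk 1] at h1
    have h2 := expI_lower ((1:ℕ) * θ) (by push_cast; simpa using hθπ)
    push_cast at h1 h2
    simp only [one_mul] at h1 h2
    exact small_of_jordan (le_trans h2 h1)
  have claim : ∀ k : ℕ, 1 ≤ k → k ≤ n → |(k:ℝ) * θ| ≤ π * ε / 2 := by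
    intro k hk
    induction k, hk using Nat.le_induction with
    | base => intro _; simpa using hbase
    | succ k hk ih =>
      intro hkn
      have hik := ih (le_trans (Nat.le_succ k) hkn)
      have hb : |((k+1:ℕ):ℝ) * θ| ≤ π := by
        push_cast
        calc |((k:ℝ)+1) * θ| = |(k:ℝ)*θ + θ| := by ring_nf
        _ ≤ |(k:ℝ)*θ| + |θ| := abs_add_le _ _
        _ ≤ π * ε / 2 + π * ε / 2 := by push_cast at hik; linarith
        _ ≤ π := by nlinarith [mul_pos Real.pi_pos (by linarith : (0:ℝ) < 1 - ε)]
      have h1 := h (k+1) (by omega) hkn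
      rw [hzk (k+1)] at h1
      have h2 := expI_lower (((k+1:ℕ):ℝ) * θ) hb
      push_cast at h1 h2 ⊢
      exact small_of_jordan (le_trans h2 h1)
  have hfin := claim n hn le_rfl
  rw [abs_mul, Nat.abs_cast] at hfin
  have hn0 : (0:ℝ) < n := by exact_mod_cast hn
  rw [le_div_iff₀ (by positivity)]
  nlinarith


-- classification of continuous characters of ℝ
lemma charClassify (f : ℝ → ℂ) (hcont : Continuous f)
    (hmul : ∀ a b : ℝ, f (a + b) = f a * f b)
    (habs : ∀ a : ℝ, ‖f a‖ = 1) :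
    ∃ t : ℝ, ∀ s : ℝ, f s = Complex.exp (Complex.I * t * s) := by
  have hne : ∀ a, f a ≠ 0 := by
    intro a h
    have := habs a; rw [h] at this; simp at this
  have hf0 : f 0 = 1 := by
    have h : f 0 * 1 = f 0 * f 0 := by rw [mul_one]; simpa using (hmul 0 0)
    exact (mul_left_cancel₀ (hne 0) h).symm
  -- find T > 0 with f close to 1 on [0,T]
  obtain ⟨T, hT, hTclose⟩ : ∃ T : ℝ, 0 < T ∧ ∀ s ∈ Set.uIoc (0:ℝ) T, ‖f s - 1‖ ≤ 1/2 := by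
    have h := Metric.continuousAt_iff.mp (hcont.continuousAt (x := 0)) (1/2) (by norm_num)
    obtain ⟨δ, hδ, hδ'⟩ := h
    refine ⟨δ/2, by linarith, fun s hs => ?_⟩
    rw [Set.uIoc_of_le (by linarith)] at hs
    have : dist s 0 < δ := by
      rw [Real.dist_eq, sub_zero, abs_of_pos hs.1]; linarith [hs.2]
    have := le_of_lt (hδ' this)
    rwa [dist_eq_norm, hf0] at this
  have hint : ∀ a b : ℝ, IntervalIntegrable f MeasureTheory.volume a b :=
    fun a b => hcont.intervalIntegrable a b
  set c : ℂ := ∫ s in (0:ℝ)..T, f s with hc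
  have hcne : c ≠ 0 := by
    intro h
    have h1 : c - T = ∫ s in (0:ℝ)..T, (f s - 1) := by
      rw [intervalIntegral.integral_sub (hint 0 T) (intervalIntegrable_const)]
      simpa using hc
    have h2 : ‖c - (T:ℂ)‖ ≤ 1/2 * |T - 0| := by
      rw [h1]
      exact intervalIntegral.norm_integral_le_of_norm_le_const hTclose
    rw [h] at h2
    simp [abs_of_pos hT] at h2
    linarith
  -- fundamental theorem of calculus
  set G : ℝ → ℂ := fun x => ∫ s in (0:ℝ)..x, f s with hG
  have hGd : ∀ x : ℝ, HasDerivAt G (f x) x := fun x =>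
    intervalIntegral.integral_hasDerivAt_right (hint 0 x)
      (hcont.stronglyMeasurableAtFilter _ _) hcont.continuousAt
  have hkey : ∀ u : ℝ, G (u + T) - G u = c * f u := by
    intro u
    have h1 : G u + ∫ s in u..(u+T), f s = G (u + T) :=
      intervalIntegral.integral_add_adjacent_intervals (hint 0 u) (hint u (u+T))
    have h2 : (∫ s in u..(u+T), f s) = ∫ s in (0:ℝ)..T, f (u + s) := by
      rw [intervalIntegral.integral_comp_add_left (fun s => f s) u]
      norm_num
    have h3 : (∫ s in (0:ℝ)..T, f (u + s)) = c * f u := by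
      have : ∀ s, f (u + s) = f u * f s := fun s => hmul u s
      simp_rw [this]
      rw [intervalIntegral.integral_const_mul]
      ring
    rw [← h1, h2, h3]; ring
  have hfd : ∀ u : ℝ, HasDerivAt f (f u * ((f T - 1) / c)) u := by
    intro u
    have hd : HasDerivAt (fun u => (G (u + T) - G u) / c) ((f (u + T) - f u)/c) u := by
      have d1 : HasDerivAt (fun u : ℝ => G (u + T)) (f (u + T)) u :=
        HasDerivAt.comp_add_const u T (hGd (u + T))
      exact ((d1.sub (hGd u)).div_const c)
    have heq : (fun u => (G (u + T) - G u) / c) = f := by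
      funext v
      rw [hkey v, mul_comm, mul_div_assoc, div_self hcne, mul_one]
    rw [heq] at hd
    have : (f (u + T) - f u)/c = f u * ((f T - 1) / c) := by
      rw [hmul u T]; ring
    rwa [this] at hd
  set a : ℂ := (f T - 1) / c with ha
  -- g := f * exp(-a x) is constant
  have hgd : ∀ u : ℝ, HasDerivAt (fun u : ℝ => f u * Complex.exp (-(a * u))) 0 u := by
    intro u
    have e1 : HasDerivAt (fun u : ℝ => (u : ℂ)) 1 u := by
      simpa using (hasDerivAt_id u).ofReal_comp
    have e2 : HasDerivAt (fun u : ℝ => -(a * (u:ℂ))) (-a) u := by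
      simpa using ((e1.const_mul a).fun_neg)
    have e3 : HasDerivAt (fun u : ℝ => Complex.exp (-(a * (u:ℂ)))) (Complex.exp (-(a*u)) * (-a)) u :=
      e2.cexp
    have := (hfd u).mul e3
    refine this.congr_deriv ?_
    ring
  have hconst : ∀ u : ℝ, f u * Complex.exp (-(a * u)) = 1 := by
    intro u
    have hdiff : Differentiable ℝ (fun u : ℝ => f u * Complex.exp (-(a * u))) :=
      fun v => (hgd v).differentiableAt
    have := is_const_of_deriv_eq_zero hdiff (fun v => (hgd v).deriv) u 0
    simpa [hf0] using this
  have hfexp : ∀ u : ℝ, f u = Complex.exp (a * u) := by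
    intro u
    have h := hconst u
    rw [Complex.exp_neg] at h
    field_simp at h
    exact h
  -- a is purely imaginary
  have hare : a.re = 0 := by
    have h := habs 1
    rw [hfexp 1] at h
    rw [Complex.norm_exp] at h
    simp at h
    exact h
  obtain ⟨t, ht⟩ : ∃ t : ℝ, a = Complex.I * t :=
    ⟨a.im, by apply Complex.ext <;> simp [hare]⟩
  refine ⟨t, fun s => ?_⟩
  rw [hfexp s, ht, mul_assoc]

section Chi
variable {ε : ℝ} {χ : ℝ → ℂ} (hε : 0 < ε) (hε' : ε < 1/10)
  (hmul : ∀ x y : ℝ, 0 < x → 0 < y → χ (x * y) = χ x * χ y)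
  (habs : ∀ x : ℝ, 0 < x → ‖χ x‖ = 1)
  (hcl : ∀ x : ℝ, |x - 1| ≤ ε → ‖χ x - 1‖ ≤ ε)

include hmul in
lemma chi_pow {y : ℝ} (hy : 0 < y) : ∀ k : ℕ, 1 ≤ k → χ (y ^ k) = (χ y) ^ k := by
  intro k hk
  induction k, hk using Nat.le_induction with
  | base => simp
  | succ k hk ih =>
    rw [pow_succ, pow_succ, hmul _ _ (pow_pos hy k) hy, ih]

include hε hε' hmul habs hcl in
lemma chi_near {n : ℕ} (hn : 1 ≤ n) {y : ℝ} (hy : 0 < y) (h : |y - 1| ≤ ε/(2*n)) :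
    ‖χ y - 1‖ ≤ π * ε / (2*n) := by
  have hz : ‖χ y‖ = 1 := habs y hy
  have harg : |Complex.arg (χ y)| ≤ π * ε / (2 * n) := by
    apply zpow_small hε hε' hz hn
    intro k hk hkn
    rw [← chi_pow hmul hy k hk]
    exact hcl _ (real_pow_close hε hε' hn hkn hy h)
  have hexp : χ y = Complex.exp ((Complex.arg (χ y) : ℝ) * Complex.I) := by
    have := Complex.norm_mul_exp_arg_mul_I (χ y)
    rw [hz] at this; simpa using this.symm
  calc ‖χ y - 1‖ = ‖Complex.exp ((Complex.arg (χ y):ℝ) * Complex.I) - 1‖ := by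
        rw [← hexp]
  _ ≤ |Complex.arg (χ y)| := expI_upper _
  _ ≤ π * ε / (2*n) := harg

include hε hε' hmul habs hcl in
lemma chi_cont : Continuous (fun s : ℝ => χ (Real.exp s)) := by
  set f : ℝ → ℂ := fun s => χ (Real.exp s) with hf
  have hπ := Real.pi_pos
  have hfmul : ∀ a b : ℝ, f (a + b) = f a * f b := by
    intro a b
    simp only [hf, Real.exp_add]
    exact hmul _ _ (Real.exp_pos a) (Real.exp_pos b)
  have hfabs : ∀ a : ℝ, ‖f a‖ = 1 := fun a => habs _ (Real.exp_pos a)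
  have h0 : ∀ δ : ℝ, 0 < δ → ∃ η : ℝ, 0 < η ∧ ∀ s : ℝ, |s| < η → ‖f s - 1‖ < δ := by
    intro δ hδ
    obtain ⟨n, hngt⟩ := exists_nat_gt (π * ε / (2 * δ))
    have hpos : 0 < π * ε / (2 * δ) := by positivity
    have hn1 : 1 ≤ n := by
      by_contra hc
      push_neg at hc
      interval_cases n
      simp at hngt
      linarith
    have hn0 : (0:ℝ) < n := by exact_mod_cast hn1
    have hn0' : (1:ℝ) ≤ n := by exact_mod_cast hn1
    refine ⟨ε / (4 * n), by positivity, fun s hs => ?_⟩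
    have hs12 : |s| ≤ 1/2 := by
      have : ε / (4 * n) ≤ 1/2 := by
        rw [div_le_div_iff₀ (by positivity) (by norm_num)]
        nlinarith [mul_le_mul_of_nonneg_left hn0' (by norm_num : (0:ℝ) ≤ 4)]
      linarith
    have h1 : |Real.exp s - 1| ≤ ε / (2 * n) := by
      have := exp_near s hs12
      have h2 : 2 * |s| ≤ ε / (2*n) := by
        rw [le_div_iff₀ (by positivity)]
        have := hs.le
        rw [le_div_iff₀ (by positivity)] at this
        nlinarith
      linarith
    have h3 := chi_near hε hε' hmul habs hcl hn1 (Real.exp_pos s) h1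
    have h4 : π * ε / (2 * n) < δ := by
      rw [div_lt_iff₀ (by positivity)]
      rw [div_lt_iff₀ (by positivity)] at hngt
      nlinarith
    exact lt_of_le_of_lt h3 h4
  rw [continuous_iff_continuousAt]
  intro s₀
  rw [Metric.continuousAt_iff]
  intro δ hδ
  obtain ⟨η, hη, hηp⟩ := h0 δ hδ
  refine ⟨η, hη, fun {s} hs => ?_⟩
  rw [Real.dist_eq] at hs
  have : f s = f s₀ * f (s - s₀) := by
    rw [← hfmul s₀ (s - s₀)]; congr 1; ring
  rw [dist_eq_norm, this]
  have : f s₀ * f (s - s₀) - f s₀ = f s₀ * (f (s - s₀) - 1) := by ring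
  rw [this]
  have := hηp (s - s₀) hs
  calc ‖f s₀ * (f (s - s₀) - 1)‖ = ‖f s₀‖ * ‖f (s - s₀) - 1‖ := by
        simp [map_mul]
  _ = ‖f (s - s₀) - 1‖ := by rw [hfabs s₀, one_mul]
  _ < δ := this

end Chi

/-- A homomorphism from `(0,∞)` to the unit circle which is within `ε` of `1`
on an `ε`-neighbourhood of `1` is an exact Archimedean character `x ↦ x^{it}`
with `t = O(1)`. -/
theorem stmt2 :
    ∃ K : ℝ, 0 < K ∧ ∀ (ε : ℝ) (χ : ℝ → ℂ), 0 < ε → ε < 1/10 →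
      (∀ x y : ℝ, 0 < x → 0 < y → χ (x * y) = χ x * χ y) →
      (∀ x : ℝ, 0 < x → ‖χ x‖ = 1) →
      (∀ x : ℝ, |x - 1| ≤ ε → ‖χ x - 1‖ ≤ ε) →
      ∃ t : ℝ, |t| ≤ K ∧ ∀ x : ℝ, 0 < x →
        χ x = Complex.exp (Complex.I * t * Real.log x) := by
  refine ⟨4, by norm_num, fun ε χ hε hε' hmul habs hcl => ?_⟩
  have hπ := Real.pi_pos
  set f : ℝ → ℂ := fun s => χ (Real.exp s) with hf
  have hcont : Continuous f := chi_cont hε hε' hmul habs hcl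
  have hfmul : ∀ a b : ℝ, f (a + b) = f a * f b := by
    intro a b
    simp only [hf, Real.exp_add]
    exact hmul _ _ (Real.exp_pos a) (Real.exp_pos b)
  have hfabs : ∀ a : ℝ, ‖f a‖ = 1 := fun a => habs _ (Real.exp_pos a)
  obtain ⟨t, ht⟩ := charClassify f hcont hfmul hfabs
  have hmain : ∀ x : ℝ, 0 < x → χ x = Complex.exp (Complex.I * t * Real.log x) := by
    intro x hx
    have : χ x = f (Real.log x) := by rw [hf]; simp [Real.exp_log hx]
    rw [this, ht]
  refine ⟨t, ?_, hmain⟩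
  -- bound |t| ≤ π ≤ 4
  by_cases ht0 : t = 0
  · rw [ht0]; norm_num
  have htpos : 0 < |t| := abs_pos.mpr ht0
  set s : ℝ := min (ε/2) (π / |t|) with hsdef
  have hs0 : 0 < s := lt_min (by linarith) (by positivity)
  have hsε : s ≤ ε/2 := min_le_left _ _
  have hst : s ≤ π / |t| := min_le_right _ _
  have hts : |t * s| ≤ π := by
    rw [abs_mul, abs_of_pos hs0]
    rw [le_div_iff₀ htpos] at hst
    linarith [hst]
  have hexpcl : |Real.exp s - 1| ≤ ε := by
    have h12 : |s| ≤ 1/2 := by rw [abs_of_pos hs0]; linarith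
    have := exp_near s h12
    rw [abs_of_pos hs0] at this
    linarith
  have hχcl := hcl (Real.exp s) hexpcl
  have hfs : χ (Real.exp s) = Complex.exp ((t * s : ℝ) * Complex.I) := by
    have : χ (Real.exp s) = f s := rfl
    rw [this, ht s]
    congr 1
    push_cast
    ring
  rw [hfs] at hχcl
  have hlow := expI_lower (t * s) hts
  have hcomb : |t| * s ≤ π * ε / 2 := by
    have h2 : 2/π * |t * s| ≤ ε := le_trans hlow hχcl
    rw [abs_mul, abs_of_pos hs0] at h2
    rw [div_mul_eq_mul_div, div_le_iff₀ hπ] at h2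
    nlinarith
  rcases le_or_gt (π / |t|) (ε/2) with hc | hc
  · exfalso
    have hseq : s = π / |t| := min_eq_right hc
    rw [hseq, mul_div_cancel₀ _ (ne_of_gt htpos)] at hcomb
    nlinarith
  · have hseq : s = ε/2 := min_eq_left hc.le
    rw [hseq] at hcomb
    have : |t| ≤ π := by nlinarith
    linarith [Real.pi_le_four]
end

section
/- Let g₁, …, g_k : ℕ → ℂ be functions bounded in absolute value by 1 (extended by g_j(n) = 0 for n ≤ 0), let h₁, …, h_k be integers, let a be an integer, and for each real d > 0 and real X ≥ 1 define S_d(X) := (1/⌊X/d⌋) Σ_{n ≤ X/d} g₁(n + a h₁) ⋯ g_k(n + a h_k) (for X/d ≥ 1). Then for any reals d₁, d₂ > 0 one has limsup_{X → ∞} |S_{d₁}(X) − S_{d₂}(X)| ≤ 2|log d₁ − log d₂|. -/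
open Filter

/-- Difference of two unweighted averages of a 1-bounded sequence. -/
lemma avg_sub_avg_le (c : ℕ → ℂ) (hc : ∀ n, ‖c n‖ ≤ 1)
    (N₁ N₂ : ℕ) (h1 : 1 ≤ N₁) (h12 : N₁ ≤ N₂) :
    ‖(1 / (N₁ : ℂ)) * ∑ n ∈ Finset.Icc 1 N₁, c n
      - (1 / (N₂ : ℂ)) * ∑ n ∈ Finset.Icc 1 N₂, c n‖
      ≤ 2 * ((N₂ : ℝ) - N₁) / N₂ := by
  have hN₁ : (0 : ℝ) < N₁ := by exact_mod_cast h1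
  have hN₂ : (0 : ℝ) < N₂ := lt_of_lt_of_le hN₁ (by exact_mod_cast h12)
  have hsplit : ∑ n ∈ Finset.Icc 1 N₂, c n
      = ∑ n ∈ Finset.Icc 1 N₁, c n + ∑ n ∈ Finset.Ioc N₁ N₂, c n := by
    rw [show (1 : ℕ) = 0 + 1 from rfl, Finset.Icc_add_one_left_eq_Ioc, Finset.Icc_add_one_left_eq_Ioc]
    exact (Finset.sum_Ioc_consecutive _ (Nat.zero_le _) h12).symm
  set A := ∑ n ∈ Finset.Icc 1 N₁, c n with hA
  set B := ∑ n ∈ Finset.Ioc N₁ N₂, c n with hB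
  have habsA : ‖A‖ ≤ N₁ := by
    calc ‖A‖ ≤ ∑ n ∈ Finset.Icc 1 N₁, ‖c n‖ :=
          norm_sum_le _ _
      _ ≤ ∑ _n ∈ Finset.Icc 1 N₁, (1 : ℝ) :=
          Finset.sum_le_sum fun n _ => hc n
      _ = N₁ := by simp [Nat.card_Icc]
  have habsB : ‖B‖ ≤ (N₂ : ℝ) - N₁ := by
    calc ‖B‖ ≤ ∑ n ∈ Finset.Ioc N₁ N₂, ‖c n‖ :=
          norm_sum_le _ _
      _ ≤ ∑ _n ∈ Finset.Ioc N₁ N₂, (1 : ℝ) :=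
          Finset.sum_le_sum fun n _ => hc n
      _ = (N₂ : ℝ) - N₁ := by
          rw [Finset.sum_const, Nat.card_Ioc, nsmul_eq_mul, mul_one,
            Nat.cast_sub h12]
  have hrw : (1 / (N₁ : ℂ)) * A - (1 / (N₂ : ℂ)) * (A + B)
      = (1 / (N₁ : ℂ) - 1 / (N₂ : ℂ)) * A - (1 / (N₂ : ℂ)) * B := by ring
  rw [hsplit, hrw]
  have h1' : ‖(1 / (N₁ : ℂ) - 1 / (N₂ : ℂ)) * A‖
      ≤ (1 / (N₁ : ℝ) - 1 / N₂) * N₁ := by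
    rw [norm_mul]
    have : ‖1 / (N₁ : ℂ) - 1 / (N₂ : ℂ)‖ = 1 / (N₁ : ℝ) - 1 / N₂ := by
      rw [show (1 / (N₁ : ℂ) - 1 / (N₂ : ℂ)) = (((1 / (N₁ : ℝ) - 1 / N₂) : ℝ) : ℂ) by
        push_cast; ring]
      rw [Complex.norm_real, Real.norm_eq_abs, abs_of_nonneg]
      have : 1 / (N₂ : ℝ) ≤ 1 / N₁ :=
        one_div_le_one_div_of_le hN₁ (by exact_mod_cast h12)
      linarith
    rw [this]
    have hnn : (0 : ℝ) ≤ 1 / (N₁ : ℝ) - 1 / N₂ := by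
      have : 1 / (N₂ : ℝ) ≤ 1 / N₁ :=
        one_div_le_one_div_of_le hN₁ (by exact_mod_cast h12)
      linarith
    exact mul_le_mul_of_nonneg_left habsA hnn
  have h2' : ‖(1 / (N₂ : ℂ)) * B‖ ≤ (1 / (N₂ : ℝ)) * ((N₂ : ℝ) - N₁) := by
    rw [norm_mul]
    have : ‖1 / (N₂ : ℂ)‖ = 1 / (N₂ : ℝ) := by
      rw [show (1 / (N₂ : ℂ)) = (((1 / N₂ : ℝ)) : ℂ) by push_cast; ring]
      rw [Complex.norm_real, Real.norm_eq_abs, abs_of_nonneg (by positivity)]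
    rw [this]
    exact mul_le_mul_of_nonneg_left habsB (by positivity)
  calc ‖(1 / (N₁ : ℂ) - 1 / (N₂ : ℂ)) * A - (1 / (N₂ : ℂ)) * B‖
      ≤ ‖(1 / (N₁ : ℂ) - 1 / (N₂ : ℂ)) * A‖
        + ‖(1 / (N₂ : ℂ)) * B‖ := by
        rw [sub_eq_add_neg]
        refine (norm_add_le _ _).trans ?_
        rw [norm_neg]
    _ ≤ (1 / (N₁ : ℝ) - 1 / N₂) * N₁ + (1 / (N₂ : ℝ)) * ((N₂ : ℝ) - N₁) :=
        add_le_add h1' h2'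
    _ = 2 * ((N₂ : ℝ) - N₁) / N₂ := by field_simp; ring

/-- The key one-sided estimate, assuming `d₂ ≤ d₁`. -/
lemma key_estimate (S : ℝ → ℝ → ℂ) (c : ℕ → ℂ) (hc : ∀ n, ‖c n‖ ≤ 1)
    (hS : ∀ d X : ℝ, S d X =
      (1 / ((⌊X / d⌋ : ℤ) : ℂ)) * ∑ n ∈ Finset.Icc 1 (⌊X / d⌋.toNat), c n)
    (d₁ d₂ : ℝ) (hd₂ : 0 < d₂) (h12 : d₂ ≤ d₁) :
    Filter.limsup (fun X : ℝ => ‖S d₁ X - S d₂ X‖) Filter.atTop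
      ≤ 2 * (Real.log d₁ - Real.log d₂) := by
  have hd₁ : 0 < d₁ := lt_of_lt_of_le hd₂ h12
  set φ : ℝ → ℝ := fun X => 2 * ((X * (1 / d₂ - 1 / d₁) + 1) / (X / d₂ - 1)) with hφ
  -- limit of φ
  have hinv : Tendsto (fun X : ℝ => 1 / X) atTop (nhds 0) := by
    simpa only [one_div] using tendsto_inv_atTop_zero
  have hφlim : Tendsto φ atTop (nhds (2 * (1 - d₂ / d₁))) := by
    have hnum : Tendsto (fun X : ℝ => (1 / d₂ - 1 / d₁) + 1 / X) atTop
        (nhds ((1 / d₂ - 1 / d₁) + 0)) := tendsto_const_nhds.add hinv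
    have hden : Tendsto (fun X : ℝ => 1 / d₂ - 1 / X) atTop
        (nhds (1 / d₂ - 0)) := tendsto_const_nhds.sub hinv
    have hne : (1 / d₂ - 0 : ℝ) ≠ 0 := by rw [sub_zero]; positivity
    have hdiv := (hnum.div hden hne).const_mul (2 : ℝ)
    have hval : 2 * (((1 / d₂ - 1 / d₁) + 0) / (1 / d₂ - 0)) = 2 * (1 - d₂ / d₁) := by
      field_simp
      ring
    rw [hval] at hdiv
    refine hdiv.congr' ?_
    filter_upwards [eventually_gt_atTop (0 : ℝ)] with X hX
    have hX0 : X ≠ 0 := ne_of_gt hX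
    simp only [Pi.div_apply, hφ]
    have e1 : X * (1 / d₂ - 1 / d₁) + 1 = X * (1 / d₂ - 1 / d₁ + 1 / X) := by
      field_simp
    have e2 : X / d₂ - 1 = X * (1 / d₂ - 1 / X) := by
      field_simp
    rw [e1, e2, mul_div_mul_left _ _ hX0]
  -- pointwise eventual bound
  have hbound : ∀ᶠ X in atTop,
      ‖S d₁ X - S d₂ X‖ ≤ φ X := by
    filter_upwards [eventually_ge_atTop (max d₁ (2 * d₂))] with X hX
    have hXd₁ : d₁ ≤ X := le_trans (le_max_left _ _) hX
    have hXd₂ : 2 * d₂ ≤ X := le_trans (le_max_right _ _) hX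
    have hXpos : 0 < X := lt_of_lt_of_le (by linarith) hXd₂
    have hfl₁ : (1 : ℤ) ≤ ⌊X / d₁⌋ := by
      rw [Int.le_floor]
      push_cast
      rw [le_div_iff₀ hd₁]
      linarith
    have hfl₂ : (1 : ℤ) ≤ ⌊X / d₂⌋ := by
      rw [Int.le_floor]
      push_cast
      rw [le_div_iff₀ hd₂]
      linarith
    have hmono : ⌊X / d₁⌋ ≤ ⌊X / d₂⌋ :=
      Int.floor_le_floor (div_le_div_of_nonneg_left hXpos.le hd₂ h12)
    set N₁ := ⌊X / d₁⌋.toNat with hN₁def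
    set N₂ := ⌊X / d₂⌋.toNat with hN₂def
    have hN₁1 : 1 ≤ N₁ := by omega
    have hN₁₂ : N₁ ≤ N₂ := by omega
    have hc₁ : ((⌊X / d₁⌋ : ℤ) : ℂ) = (N₁ : ℂ) := by
      rw [hN₁def, ← Int.cast_natCast, Int.toNat_of_nonneg (by omega)]
    have hc₂ : ((⌊X / d₂⌋ : ℤ) : ℂ) = (N₂ : ℂ) := by
      rw [hN₂def, ← Int.cast_natCast, Int.toNat_of_nonneg (by omega)]
    have hmain : ‖S d₁ X - S d₂ X‖ ≤ 2 * ((N₂ : ℝ) - N₁) / N₂ := by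
      rw [hS d₁ X, hS d₂ X, hc₁, hc₂]
      exact avg_sub_avg_le c hc N₁ N₂ hN₁1 hN₁₂
    refine hmain.trans ?_
    -- now compare 2*(N₂ - N₁)/N₂ with φ X
    have hN₂le : (N₂ : ℝ) ≤ X / d₂ := by
      rw [hN₂def, show ((⌊X / d₂⌋.toNat : ℕ) : ℝ) = ((⌊X / d₂⌋ : ℤ) : ℝ) by
        rw [← Int.cast_natCast, Int.toNat_of_nonneg (by omega)]]
      exact Int.floor_le _
    have hN₁ge : X / d₁ - 1 ≤ (N₁ : ℝ) := by
      rw [hN₁def, show ((⌊X / d₁⌋.toNat : ℕ) : ℝ) = ((⌊X / d₁⌋ : ℤ) : ℝ) by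
        rw [← Int.cast_natCast, Int.toNat_of_nonneg (by omega)]]
      exact (Int.sub_one_lt_floor _).le
    have hN₂ge : X / d₂ - 1 ≤ (N₂ : ℝ) := by
      rw [hN₂def, show ((⌊X / d₂⌋.toNat : ℕ) : ℝ) = ((⌊X / d₂⌋ : ℤ) : ℝ) by
        rw [← Int.cast_natCast, Int.toNat_of_nonneg (by omega)]]
      exact (Int.sub_one_lt_floor _).le
    have hdenpos : 0 < X / d₂ - 1 := by
      rw [lt_sub_iff_add_lt, zero_add, lt_div_iff₀ hd₂]
      linarith
    rw [hφ]
    rw [mul_div_assoc]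
    have hnum2 : (N₂ : ℝ) - N₁ ≤ X * (1 / d₂ - 1 / d₁) + 1 := by
      have : X * (1 / d₂ - 1 / d₁) + 1 = X / d₂ - (X / d₁ - 1) := by ring
      rw [this]
      linarith
    have hnumnn : (0 : ℝ) ≤ (N₂ : ℝ) - N₁ := by
      have : (N₁ : ℝ) ≤ N₂ := by exact_mod_cast hN₁₂
      linarith
    have := div_le_div₀ (by linarith : (0:ℝ) ≤ X * (1 / d₂ - 1 / d₁) + 1)
      hnum2 hdenpos hN₂ge
    linarith
  -- pass to the limit
  have hconn : Filter.limsup (fun X : ℝ => ‖S d₁ X - S d₂ X‖) atTop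
      ≤ 2 * (1 - d₂ / d₁) := by
    have h1 : Filter.limsup (fun X : ℝ => ‖S d₁ X - S d₂ X‖) atTop
        ≤ Filter.limsup φ atTop :=
      Filter.limsup_le_limsup hbound
        (Filter.isCoboundedUnder_le_of_le atTop fun X => (norm_nonneg _))
        hφlim.isBoundedUnder_le
    rw [hφlim.limsup_eq] at h1
    exact h1
  refine hconn.trans ?_
  have hlog : Real.log (d₂ / d₁) ≤ d₂ / d₁ - 1 :=
    Real.log_le_sub_one_of_pos (div_pos hd₂ hd₁)
  rw [Real.log_div (ne_of_gt hd₂) (ne_of_gt hd₁)] at hlog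
  linarith

/-- Log-Lipschitz estimate for the correlation averages: changing the scale
parameter `d` changes the unweighted correlation average by at most twice the
logarithmic distance between the scales, in the limit `X → ∞`. -/
theorem stmt4 (k : ℕ) (g : Fin k → ℤ → ℂ) (h : Fin k → ℤ) (a : ℤ)
    (hbd : ∀ j n, ‖g j n‖ ≤ 1)
    (hzero : ∀ j (n : ℤ), n ≤ 0 → g j n = 0)
    (S : ℝ → ℝ → ℂ)
    (hS : ∀ d X : ℝ, S d X =
      (1 / ((⌊X / d⌋ : ℤ) : ℂ)) *
        ∑ n ∈ Finset.Icc 1 (⌊X / d⌋.toNat), ∏ j, g j ((n : ℤ) + a * h j))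
    (d₁ d₂ : ℝ) (hd₁ : 0 < d₁) (hd₂ : 0 < d₂) :
    Filter.limsup (fun X : ℝ => ‖S d₁ X - S d₂ X‖) Filter.atTop
      ≤ 2 * |Real.log d₁ - Real.log d₂| := by
  set c : ℕ → ℂ := fun n => ∏ j, g j ((n : ℤ) + a * h j) with hcdef
  have hc : ∀ n, ‖c n‖ ≤ 1 := by
    intro n
    rw [hcdef]
    simp only
    rw [norm_prod]
    exact Finset.prod_le_one (fun j _ => norm_nonneg _) (fun j _ => hbd j _)
  have hS' : ∀ d X : ℝ, S d X =
      (1 / ((⌊X / d⌋ : ℤ) : ℂ)) * ∑ n ∈ Finset.Icc 1 (⌊X / d⌋.toNat), c n :=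
    hS
  rcases le_total d₂ d₁ with h12 | h21
  · rw [abs_of_nonneg (sub_nonneg.2 (Real.log_le_log hd₂ h12))]
    exact key_estimate S c hc hS' d₁ d₂ hd₂ h12
  · rw [abs_of_nonpos (sub_nonpos.2 (Real.log_le_log hd₁ h21)), neg_sub]
    have hfun : (fun X : ℝ => ‖S d₁ X - S d₂ X‖)
        = fun X : ℝ => ‖S d₂ X - S d₁ X‖ :=
      funext fun X => norm_sub_rev _ _
    rw [hfun]
    exact key_estimate S c hc hS' d₂ d₁ hd₁ h21
end

section
/- Let a : ℝ → [0,1] be a measurable function, and define the one-sided Hardy–Littlewood maximal function Ma(s) := sup_{r > 0} (1/r) ∫_{s−r}^{s} a(s′) ds′. Then for any λ > 0, the Lebesgue measure of the set {s ∈ ℝ : Ma(s) ≥ λ} is at most (1/λ) ∫_ℝ a(s) ds. -/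
open MeasureTheory Set Filter Topology

namespace Stmt6Aux

/-- The primitive of `a` based at `0`. -/
noncomputable def P (a : ℝ → ℝ) (x : ℝ) : ℝ := ∫ t in (0:ℝ)..x, a t

/-- The "sunrise" auxiliary function. -/
noncomputable def H (a : ℝ → ℝ) (l x : ℝ) : ℝ := l * x - P a x

/-- The sunrise set. -/
def U (a : ℝ → ℝ) (l : ℝ) : Set ℝ := {s | ∃ y, y < s ∧ H a l s < H a l y}

variable {a : ℝ → ℝ} {l : ℝ}

theorem mem_U {s : ℝ} : s ∈ U a l ↔ ∃ y, y < s ∧ H a l s < H a l y := Iff.rfl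

theorem hH_cont (hint : Integrable a) : Continuous (H a l) :=
  (continuous_const.mul continuous_id).sub (hint.continuous_primitive 0)

theorem P_bounds (hint : Integrable a) (h0 : ∀ s, 0 ≤ a s) (y : ℝ) :
    -(∫ t, a t) ≤ P a y ∧ P a y ≤ ∫ t, a t := by
  have hnn : 0 ≤ᵐ[(volume : Measure ℝ)] a := ae_of_all _ h0
  have hInn : 0 ≤ ∫ t, a t := integral_nonneg h0
  rcases le_total 0 y with hy | hy
  · rw [P, intervalIntegral.integral_of_le hy]
    have h1 : 0 ≤ ∫ t in Ioc (0:ℝ) y, a t :=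
      setIntegral_nonneg measurableSet_Ioc fun t _ => h0 t
    have h2 : ∫ t in Ioc (0:ℝ) y, a t ≤ ∫ t, a t := setIntegral_le_integral hint hnn
    constructor <;> linarith
  · rw [P, intervalIntegral.integral_symm, intervalIntegral.integral_of_le hy]
    have h1 : 0 ≤ ∫ t in Ioc y (0:ℝ), a t :=
      setIntegral_nonneg measurableSet_Ioc fun t _ => h0 t
    have h2 : ∫ t in Ioc y (0:ℝ), a t ≤ ∫ t, a t := setIntegral_le_integral hint hnn
    constructor <;> linarith

theorem H_sub (hint : Integrable a) {y x : ℝ} (h : y ≤ x) :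
    H a l x = H a l y + (l * (x - y) - ∫ t in Ioc y x, a t) := by
  have h1 : (∫ t in (0:ℝ)..y, a t) + ∫ t in y..x, a t = ∫ t in (0:ℝ)..x, a t :=
    intervalIntegral.integral_add_adjacent_intervals hint.intervalIntegrable
      hint.intervalIntegrable
  rw [intervalIntegral.integral_of_le h] at h1
  simp only [H, P]
  linarith

theorem U_open (hint : Integrable a) : IsOpen (U a l) := by
  have : U a l = ⋃ y : ℝ, (Ioi y ∩ H a l ⁻¹' Iio (H a l y)) := by
    ext s
    simp only [U, mem_setOf_eq, mem_iUnion, mem_inter_iff, mem_Ioi, mem_preimage, mem_Iio]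
  rw [this]
  exact isOpen_iUnion fun y => isOpen_Ioi.inter (isOpen_Iio.preimage (hH_cont hint))

/-- The maximum of `H` over `Iic T` is attained and is not in `U`. -/
theorem exists_max (hint : Integrable a) (h0 : ∀ s, 0 ≤ a s) (hl : 0 < l) (T : ℝ) :
    ∃ c, c ≤ T ∧ c ∉ U a l ∧ ∀ y, y ≤ T → H a l y ≤ H a l c := by
  set I := ∫ t, a t with hI
  have Hub : ∀ y, H a l y ≤ l * y + I := by
    intro y
    have := (P_bounds hint h0 y).1
    simp only [H]
    linarith
  set y0 : ℝ := min T ((H a l T - I - 1) / l) with hy0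
  have hy0T : y0 ≤ T := min_le_left _ _
  have hsmall : ∀ y, y ≤ y0 → H a l y < H a l T := by
    intro y hy
    have h2 : y ≤ (H a l T - I - 1) / l := le_trans hy (min_le_right _ _)
    have h3 : l * y ≤ H a l T - I - 1 := by
      have := mul_le_mul_of_nonneg_left h2 hl.le
      rwa [mul_div_cancel₀ _ hl.ne'] at this
    have := Hub y
    linarith
  obtain ⟨c, hcmem, hcmax⟩ :=
    isCompact_Icc.exists_isMaxOn (nonempty_Icc.2 hy0T) ((hH_cont hint).continuousOn)
  have glob : ∀ y, y ≤ T → H a l y ≤ H a l c := by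
    intro y hy
    rcases le_total y y0 with h | h
    · exact le_trans (hsmall y h).le (hcmax (right_mem_Icc.2 hy0T))
    · exact hcmax ⟨h, hy⟩
  refine ⟨c, hcmem.2, ?_, glob⟩
  rintro ⟨y, hy1, hy2⟩
  exact absurd (glob y (hy1.le.trans hcmem.2)) (not_le.2 hy2)

theorem exists_right (hint : Integrable a) (h0 : ∀ s, 0 ≤ a s) (hl : 0 < l) (s : ℝ) :
    ∃ c, s < c ∧ c ∉ U a l := by
  obtain ⟨c0, _, _, hc0max⟩ := exists_max hint h0 hl s
  set I := ∫ t, a t with hI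
  have Hlb : ∀ y, l * y - I ≤ H a l y := by
    intro y
    have := (P_bounds hint h0 y).2
    simp only [H]
    linarith
  set T : ℝ := max (s + 1) ((H a l c0 + I + 1) / l) with hT
  have hHT : H a l c0 < H a l T := by
    have h1 : (H a l c0 + I + 1) / l ≤ T := le_max_right _ _
    have h2 : H a l c0 + I + 1 ≤ l * T := by
      have := mul_le_mul_of_nonneg_left h1 hl.le
      rwa [mul_div_cancel₀ _ hl.ne'] at this
    have := Hlb T
    linarith
  obtain ⟨c, hcT, hcU, hcmax⟩ := exists_max hint h0 hl T
  refine ⟨c, ?_, hcU⟩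
  by_contra hcs
  push_neg at hcs
  have h1 := hc0max c hcs
  have h2 := hcmax T le_rfl
  linarith

theorem exists_left (hint : Integrable a) (h0 : ∀ s, 0 ≤ a s) (hl : 0 < l) (s : ℝ) :
    ∃ c, c < s ∧ c ∉ U a l := by
  obtain ⟨c, hc1, hc2, _⟩ := exists_max hint h0 hl (s - 1)
  exact ⟨c, by linarith, hc2⟩

/-- Right endpoint of the component of `s`. -/
noncomputable def B (a : ℝ → ℝ) (l s : ℝ) : ℝ := sInf (Ici s ∩ (U a l)ᶜ)

/-- Left endpoint of the component of `s`. -/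
noncomputable def A (a : ℝ → ℝ) (l s : ℝ) : ℝ := sSup (Iic s ∩ (U a l)ᶜ)

theorem comp_spec (hint : Integrable a) (h0 : ∀ s, 0 ≤ a s) (hl : 0 < l) {s : ℝ}
    (hs : s ∈ U a l) :
    A a l s < s ∧ s < B a l s ∧ A a l s ∉ U a l ∧ B a l s ∉ U a l ∧
      Ioo (A a l s) (B a l s) ⊆ U a l := by
  have hUo : IsOpen (U a l) := U_open hint
  obtain ⟨cr, hcr1, hcr2⟩ := exists_right hint h0 hl s
  obtain ⟨cl, hcl1, hcl2⟩ := exists_left hint h0 hl s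
  have hBne : (Ici s ∩ (U a l)ᶜ).Nonempty := ⟨cr, hcr1.le, hcr2⟩
  have hBbd : BddBelow (Ici s ∩ (U a l)ᶜ) := ⟨s, fun x hx => hx.1⟩
  have hBmem := (isClosed_Ici.inter hUo.isClosed_compl).csInf_mem hBne hBbd
  have hAne : (Iic s ∩ (U a l)ᶜ).Nonempty := ⟨cl, hcl1.le, hcl2⟩
  have hAbd : BddAbove (Iic s ∩ (U a l)ᶜ) := ⟨s, fun x hx => hx.1⟩
  have hAmem := (isClosed_Iic.inter hUo.isClosed_compl).csSup_mem hAne hAbd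
  have hsB : s < B a l s := by
    have h1 : s ≤ B a l s := hBmem.1
    rcases lt_or_eq_of_le h1 with h | h
    · exact h
    · rw [h] at hs; exact absurd hs hBmem.2
  have hAs : A a l s < s := by
    have h1 : A a l s ≤ s := hAmem.1
    rcases lt_or_eq_of_le h1 with h | h
    · exact h
    · rw [← h] at hs; exact absurd hs hAmem.2
  refine ⟨hAs, hsB, hAmem.2, hBmem.2, ?_⟩
  intro x hx
  by_contra hxU
  rcases le_total s x with h | h
  · exact absurd (csInf_le hBbd ⟨h, hxU⟩) (not_le.2 hx.2)
  · exact absurd (le_csSup hAbd ⟨h, hxU⟩) (not_le.2 hx.1)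

theorem mem_comp (hint : Integrable a) (h0 : ∀ s, 0 ≤ a s) (hl : 0 < l) {s x : ℝ}
    (hs : s ∈ U a l) (hx : x ∈ Ioo (A a l s) (B a l s)) :
    A a l x = A a l s ∧ B a l x = B a l s := by
  obtain ⟨hAs, hsB, hAU, hBU, hsub⟩ := comp_spec hint h0 hl hs
  have hxU : x ∈ U a l := hsub hx
  obtain ⟨hAx, hxB, hAxU, hBxU, hsubx⟩ := comp_spec hint h0 hl hxU
  have hUo : IsOpen (U a l) := U_open hint
  constructor
  · apply le_antisymm
    · by_contra hlt
      push_neg at hlt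
      exact hAxU (hsub ⟨hlt, lt_trans hAx hx.2⟩)
    · exact le_csSup ⟨x, fun z hz => hz.1⟩ ⟨hx.1.le, hAU⟩
  · apply le_antisymm
    · exact csInf_le ⟨x, fun z hz => hz.1⟩ ⟨hx.2.le, hBU⟩
    · by_contra hlt
      push_neg at hlt
      exact hBxU (hsub ⟨lt_trans hx.1 hxB, hlt⟩)

theorem B_eq (hint : Integrable a) (h0 : ∀ s, 0 ≤ a s) (hl : 0 < l) {s t : ℝ}
    (hs : s ∈ U a l) (ht : t ∈ U a l) (hA : A a l s = A a l t) : B a l s = B a l t := by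
  obtain ⟨hAs, hsB, hAU, hBU, hsub⟩ := comp_spec hint h0 hl hs
  obtain ⟨hAt, htB, hAU', hBU', hsub'⟩ := comp_spec hint h0 hl ht
  rcases lt_trichotomy (B a l s) (B a l t) with h | h | h
  · exact absurd (hsub' ⟨by rw [← hA]; exact lt_trans hAs hsB, h⟩) hBU
  · exact h
  · exact absurd (hsub ⟨by rw [hA]; exact lt_trans hAt htB, h⟩) hBU'

theorem A_eq (hint : Integrable a) (h0 : ∀ s, 0 ≤ a s) (hl : 0 < l) {s t : ℝ}
    (hs : s ∈ U a l) (ht : t ∈ U a l) (hB : B a l s = B a l t) : A a l s = A a l t := by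
  obtain ⟨hAs, hsB, hAU, hBU, hsub⟩ := comp_spec hint h0 hl hs
  obtain ⟨hAt, htB, hAU', hBU', hsub'⟩ := comp_spec hint h0 hl ht
  rcases lt_trichotomy (A a l s) (A a l t) with h | h | h
  · exact absurd (hsub ⟨h, by rw [hB]; exact lt_trans hAt htB⟩) hAU'
  · exact h
  · exact absurd (hsub' ⟨h, by rw [← hB]; exact lt_trans hAs hsB⟩) hAU

theorem H_B_le (hint : Integrable a) (h0 : ∀ s, 0 ≤ a s) (hl : 0 < l) {s : ℝ}
    (hs : s ∈ U a l) : H a l (B a l s) ≤ H a l (A a l s) := by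
  obtain ⟨hAs, hsB, hAU, hBU, hsub⟩ := comp_spec hint h0 hl hs
  have step : ∀ x ∈ Ioo (A a l s) (B a l s), H a l x ≤ H a l (A a l s) := by
    intro x hx
    obtain ⟨c, hc, hcmax⟩ :=
      isCompact_Icc.exists_isMaxOn (nonempty_Icc.2 hx.1.le) ((hH_cont hint).continuousOn)
    have hxc : H a l x ≤ H a l c := hcmax (right_mem_Icc.2 hx.1.le)
    by_cases hcA : H a l c ≤ H a l (A a l s)
    · linarith
    push_neg at hcA
    exfalso
    have hcne : c ≠ A a l s := fun h => by rw [h] at hcA; exact lt_irrefl _ hcA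
    have hcU : c ∈ U a l :=
      hsub ⟨lt_of_le_of_ne hc.1 (Ne.symm hcne), lt_of_le_of_lt hc.2 hx.2⟩
    obtain ⟨y, hy1, hy2⟩ := hcU
    rcases le_or_gt (A a l s) y with h | h
    · exact absurd (hcmax ⟨h, hy1.le.trans hc.2⟩) (not_le.2 hy2)
    · exact hAU ⟨y, h, lt_trans hcA hy2⟩
  have hev : ∀ᶠ x in 𝓝[<] (B a l s), H a l x ≤ H a l (A a l s) :=
    eventually_of_mem (Ioo_mem_nhdsLT_of_mem ⟨lt_trans hAs hsB, le_rfl⟩) step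
  exact le_of_tendsto (((hH_cont hint).tendsto _).mono_left nhdsWithin_le_nhds) hev

theorem len_le (hint : Integrable a) (h0 : ∀ s, 0 ≤ a s) (hl : 0 < l) {s : ℝ}
    (hs : s ∈ U a l) :
    B a l s - A a l s ≤ (1 / l) * ∫ t in Ioc (A a l s) (B a l s), a t := by
  obtain ⟨hAs, hsB, _, _, _⟩ := comp_spec hint h0 hl hs
  have hAB : A a l s ≤ B a l s := (lt_trans hAs hsB).le
  have hH := H_B_le hint h0 hl hs
  have hsubH := H_sub (l := l) hint hAB
  have hkey : l * (B a l s - A a l s) ≤ ∫ t in Ioc (A a l s) (B a l s), a t := by linarith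
  rw [one_div_mul_eq_div, le_div_iff₀ hl]
  linarith

theorem measure_U (hint : Integrable a) (h0 : ∀ s, 0 ≤ a s) (hl : 0 < l) :
    volume (U a l) ≤ ENNReal.ofReal ((1 / l) * ∫ t, a t) := by
  classical
  have hrep : ∀ x ∈ A a l '' U a l, ∃ s, s ∈ U a l ∧ A a l s = x := by
    rintro x ⟨s, hs, he⟩; exact ⟨s, hs, he⟩
  choose! rep hrep1 hrep2 using hrep
  set S := A a l '' U a l with hS
  set Y : ℝ → ℝ := fun x => B a l (rep x) with hY
  have hxY : ∀ x ∈ S, x < Y x := by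
    intro x hx
    obtain ⟨hAs, hsB, _, _, _⟩ := comp_spec hint h0 hl (hrep1 x hx)
    simp only [hY]
    conv_lhs => rw [← hrep2 x hx]
    exact lt_trans hAs hsB
  have hIooU : ∀ x ∈ S, Ioo x (Y x) ⊆ U a l := by
    intro x hx
    obtain ⟨_, _, _, _, hsub⟩ := comp_spec hint h0 hl (hrep1 x hx)
    simp only [hY]
    intro z hz
    refine hsub ⟨?_, hz.2⟩
    rw [hrep2 x hx]
    exact hz.1
  have hcover : U a l = ⋃ x ∈ S, Ioo x (Y x) := by
    apply Subset.antisymm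
    · intro s hs
      have hxS : A a l s ∈ S := mem_image_of_mem _ hs
      have hBeq : Y (A a l s) = B a l s :=
        B_eq hint h0 hl (hrep1 _ hxS) hs (hrep2 _ hxS)
      refine mem_biUnion hxS ?_
      rw [hBeq]
      obtain ⟨hAs, hsB, _, _, _⟩ := comp_spec hint h0 hl hs
      exact ⟨hAs, hsB⟩
    · exact iUnion₂_subset hIooU
  have hdisj : S.PairwiseDisjoint (fun x => Ioo x (Y x)) := by
    intro x hx x' hx' hne
    refine Set.disjoint_left.2 fun z hz hz' => hne ?_
    have h1 : A a l z = A a l (rep x) := by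
      refine (mem_comp hint h0 hl (hrep1 x hx) ?_).1
      rw [hrep2 x hx]; exact ⟨hz.1, hz.2⟩
    have h2 : A a l z = A a l (rep x') := by
      refine (mem_comp hint h0 hl (hrep1 x' hx') ?_).1
      rw [hrep2 x' hx']; exact ⟨hz'.1, hz'.2⟩
    rw [← hrep2 x hx, ← hrep2 x' hx', ← h1, ← h2]
  have hdisj' : S.PairwiseDisjoint (fun x => Ioc x (Y x)) := by
    intro x hx x' hx' hne
    refine Set.disjoint_left.2 fun z hz hz' => ?_
    rcases lt_or_eq_of_le hz.2 with hzY | hzY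
    · rcases lt_or_eq_of_le hz'.2 with hzY' | hzY'
      · exact Set.disjoint_left.1 (hdisj hx hx' hne) ⟨hz.1, hzY⟩ ⟨hz'.1, hzY'⟩
      · obtain ⟨_, _, _, hBU', _⟩ := comp_spec hint h0 hl (hrep1 x' hx')
        have hzU : z ∈ U a l := hIooU x hx ⟨hz.1, hzY⟩
        simp only [hzY', hY] at hzU
        exact hBU' hzU
    · rcases lt_or_eq_of_le hz'.2 with hzY' | hzY'
      · obtain ⟨_, _, _, hBU, _⟩ := comp_spec hint h0 hl (hrep1 x hx)
        have hzU : z ∈ U a l := hIooU x' hx' ⟨hz'.1, hzY'⟩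
        simp only [hzY, hY] at hzU
        exact hBU hzU
      · have hB : B a l (rep x) = B a l (rep x') := by
          simp only [hY] at hzY hzY'
          rw [← hzY, ← hzY']
        have hA := A_eq hint h0 hl (hrep1 x hx) (hrep1 x' hx') hB
        refine hne ?_
        rw [← hrep2 x hx, ← hrep2 x' hx', hA]
  have hcount : S.Countable := hdisj.countable_of_Ioo hxY
  haveI := hcount.to_subtype
  have hpair : Pairwise fun (i j : S) => Disjoint (Ioc (i : ℝ) (Y i)) (Ioc (j : ℝ) (Y j)) := by
    intro i j hij
    exact hdisj' i.2 j.2 fun h => hij (Subtype.ext h)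
  calc volume (U a l) = volume (⋃ x ∈ S, Ioo x (Y x)) := by rw [hcover]
    _ ≤ ∑' x : S, volume (Ioo (x : ℝ) (Y x)) := measure_biUnion_le volume hcount _
    _ ≤ ∑' x : S, ENNReal.ofReal ((1 / l) * ∫ t in Ioc (x : ℝ) (Y x), a t) := by
        refine ENNReal.tsum_le_tsum fun x => ?_
        rw [Real.volume_Ioo]
        refine ENNReal.ofReal_le_ofReal ?_
        have := len_le hint h0 hl (hrep1 x x.2)
        rw [hrep2 x x.2] at this
        exact this
    _ = ∑' x : S, ENNReal.ofReal (1 / l) * ENNReal.ofReal (∫ t in Ioc (x : ℝ) (Y x), a t) := by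
        refine tsum_congr fun x => ?_
        rw [ENNReal.ofReal_mul (by positivity)]
    _ = ENNReal.ofReal (1 / l) * ∑' x : S, ENNReal.ofReal (∫ t in Ioc (x : ℝ) (Y x), a t) :=
        ENNReal.tsum_mul_left
    _ = ENNReal.ofReal (1 / l) * ∑' x : S, ∫⁻ t in Ioc (x : ℝ) (Y x), ENNReal.ofReal (a t) := by
        congr 1
        refine tsum_congr fun x => ?_
        exact ofReal_integral_eq_lintegral_ofReal hint.integrableOn
          (ae_restrict_of_ae (ae_of_all _ h0))
    _ = ENNReal.ofReal (1 / l) * ∫⁻ t in ⋃ x : S, Ioc (x : ℝ) (Y x), ENNReal.ofReal (a t) := by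
        rw [lintegral_iUnion (fun i => measurableSet_Ioc) hpair]
    _ ≤ ENNReal.ofReal (1 / l) * ∫⁻ t, ENNReal.ofReal (a t) :=
        mul_le_mul_right (setLIntegral_le_lintegral _ _) _
    _ = ENNReal.ofReal (1 / l) * ENNReal.ofReal (∫ t, a t) := by
        rw [← ofReal_integral_eq_lintegral_ofReal hint (ae_of_all _ h0)]
    _ = ENNReal.ofReal ((1 / l) * ∫ t, a t) := (ENNReal.ofReal_mul (by positivity)).symm

theorem E_subset (hint : Integrable a) (h0 : ∀ s, 0 ≤ a s) (h1 : ∀ s, a s ≤ 1)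
    {lam : ℝ} (hl : 0 < l) (hllam : l < lam) :
    {s : ℝ | lam ≤ ⨆ r > (0:ℝ), (1 / r) * ∫ t in Set.Ioc (s - r) s, a t} ⊆ U a l := by
  intro s hs
  simp only [mem_setOf_eq] at hs
  have hgle : ∀ r : ℝ, (⨆ _ : r > (0:ℝ), (1 / r) * ∫ t in Set.Ioc (s - r) s, a t) ≤ 1 := by
    intro r
    rcases lt_or_ge 0 r with hr | hr
    · rw [ciSup_pos hr]
      have hsr : s - (s - r) = r := by ring
      have hvol : ∫ _t in Ioc (s - r) s, (1:ℝ) = r := by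
        rw [setIntegral_const, measureReal_def, Real.volume_Ioc, hsr, ENNReal.toReal_ofReal hr.le,
          smul_eq_mul, mul_one]
      have hint' : ∫ t in Ioc (s - r) s, a t ≤ r := by
        calc ∫ t in Ioc (s - r) s, a t ≤ ∫ _t in Ioc (s - r) s, (1:ℝ) :=
              setIntegral_mono_on hint.integrableOn
                (integrableOn_const (by
                  rw [Real.volume_Ioc]; exact ENNReal.ofReal_ne_top))
                measurableSet_Ioc fun t _ => h1 t
          _ = r := hvol
      rw [one_div_mul_eq_div, div_le_one hr]
      exact hint'
    · haveI : IsEmpty (r > (0:ℝ)) := ⟨fun h => absurd h (not_lt.2 hr)⟩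
      rw [Real.iSup_of_isEmpty]
      norm_num
  obtain ⟨r, hr⟩ := exists_lt_of_lt_ciSup (lt_of_lt_of_le hllam hs)
  have hrpos : 0 < r := by
    by_contra h
    push_neg at h
    haveI : IsEmpty (r > (0:ℝ)) := ⟨fun h' => absurd h' (not_lt.2 h)⟩
    rw [Real.iSup_of_isEmpty] at hr
    linarith
  rw [ciSup_pos hrpos] at hr
  refine ⟨s - r, by linarith, ?_⟩
  have hle : s - r ≤ s := by linarith
  have hsub := H_sub (l := l) hint hle
  have hlr : l * r < ∫ t in Ioc (s - r) s, a t := by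
    have h2 : (1 / r) * (∫ t in Ioc (s - r) s, a t) * r = ∫ t in Ioc (s - r) s, a t := by
      field_simp
    nlinarith
  have hsr : s - (s - r) = r := by ring
  rw [hsr] at hsub
  linarith

end Stmt6Aux

open Stmt6Aux in
/-- One-sided Hardy--Littlewood maximal inequality with constant 1. -/
theorem stmt6 (a : ℝ → ℝ) (hmeas : Measurable a)
    (h0 : ∀ s, 0 ≤ a s) (h1 : ∀ s, a s ≤ 1) (hint : Integrable a)
    (lam : ℝ) (hlam : 0 < lam) :
    volume {s : ℝ | lam ≤ ⨆ r > (0:ℝ), (1 / r) * ∫ t in Set.Ioc (s - r) s, a t}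
      ≤ ENNReal.ofReal ((1 / lam) * ∫ t, a t) := by
  set E := {s : ℝ | lam ≤ ⨆ r > (0:ℝ), (1 / r) * ∫ t in Set.Ioc (s - r) s, a t} with hE
  have key : ∀ l : ℝ, 0 < l → l < lam →
      volume E ≤ ENNReal.ofReal ((1 / l) * ∫ t, a t) := fun l hl1 hl2 =>
    (measure_mono (E_subset hint h0 h1 hl1 hl2)).trans (measure_U hint h0 hl1)
  have tend : Tendsto (fun x : ℝ => ENNReal.ofReal ((1 / x) * ∫ t, a t)) (𝓝[<] lam)
      (𝓝 (ENNReal.ofReal ((1 / lam) * ∫ t, a t))) := by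
    refine Tendsto.mono_left ?_ nhdsWithin_le_nhds
    exact (ENNReal.continuous_ofReal.tendsto _).comp
      (((continuousAt_const.div continuousAt_id hlam.ne').mul continuousAt_const))
  have ev : ∀ᶠ x in 𝓝[<] lam, volume E ≤ ENNReal.ofReal ((1 / x) * ∫ t, a t) :=
    eventually_of_mem (Ioo_mem_nhdsLT_of_mem ⟨hlam, le_rfl⟩) fun x hx => key x hx.1 hx.2
  exact ge_of_tendsto tend ev
end

section
/- Let a : ℝ → [0,1] be measurable, supported in an interval of length L, and suppose s₀ ∈ ℝ satisfies ∫_{s₀−r}^{s₀} a(t) dt ≤ c·r for all r > 0, where 0 < c < 1. Then for any 3 ≤ D one has ∫_{s₀ − log D}^{s₀ − log log D} a(s)/(s₀ − s) ds ≤ c·(log log D − log log log D + 1). -/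
open MeasureTheory

/-- The Fubini/layer-cake estimate near a 'multiplicative point of density'. -/
theorem stmt15 (a : ℝ → ℝ) (hmeas : Measurable a)
    (h0 : ∀ s, 0 ≤ a s) (h1 : ∀ s, a s ≤ 1)
    (L : ℝ) (hsupp : ∃ c₀ : ℝ, Function.support a ⊆ Set.Icc c₀ (c₀ + L))
    (s₀ c : ℝ) (hc0 : 0 < c) (hc1 : c < 1)
    (hmax : ∀ r > (0:ℝ), (∫ t in Set.Ioc (s₀ - r) s₀, a t) ≤ c * r)
    (D : ℝ) (hD : 3 ≤ D) :
    (∫ s in Set.Ioc (s₀ - Real.log D) (s₀ - Real.log (Real.log D)), a s / (s₀ - s))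
      ≤ c * (Real.log (Real.log D) - Real.log (Real.log (Real.log D)) + 1) := by
  set A := Real.log D with hAdef
  set B := Real.log A with hBdef
  have hD0 : (0:ℝ) < D := by linarith
  have hA1 : 1 < A := by
    have h3 : Real.exp 1 < 3 := by have := Real.exp_one_lt_d9; linarith
    exact (Real.lt_log_iff_exp_lt hD0).2 (lt_of_lt_of_le h3 hD)
  have hA0 : 0 < A := lt_trans one_pos hA1
  have hB0 : 0 < B := Real.log_pos hA1
  have hBA : B < A := by
    have := Real.log_lt_sub_one_of_pos hA0 (by linarith)
    linarith
  set S := Set.Ioc (s₀ - A) (s₀ - B) with hSdef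
  have hSmeas : MeasurableSet S := measurableSet_Ioc
  -- integrability of a on bounded sets
  have hIntOn : ∀ (s : Set ℝ), MeasurableSet s → volume s < ⊤ → IntegrableOn a s := by
    intro s hs hvol
    apply Integrable.mono' (g := fun _ => (1:ℝ)) (integrableOn_const hvol.ne)
      hmeas.aestronglyMeasurable
    filter_upwards with x
    rw [Real.norm_eq_abs, abs_of_nonneg (h0 x)]
    exact h1 x
  -- the kernel
  set E : Set (ℝ × ℝ) := {p : ℝ × ℝ | s₀ - A < p.1 ∧ p.1 ≤ s₀ - B ∧ s₀ - p.1 < p.2 ∧ p.2 ≤ A}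
    with hEdef
  have hEmeas : MeasurableSet E :=
    MeasurableSet.inter (measurableSet_lt measurable_const measurable_fst)
      ((measurableSet_le measurable_fst measurable_const).inter
        ((measurableSet_lt (measurable_const.sub measurable_fst) measurable_snd).inter
          (measurableSet_le measurable_snd measurable_const)))
  set G : ℝ × ℝ → ℝ := E.indicator (fun p => a p.1 / p.2 ^ 2) with hGdef
  have hGmeas : Measurable G :=
    Measurable.indicator ((hmeas.comp measurable_fst).div (measurable_snd.pow_const 2)) hEmeas
  have hGon : ∀ p : ℝ × ℝ, (s₀ - A < p.1 ∧ p.1 ≤ s₀ - B ∧ s₀ - p.1 < p.2 ∧ p.2 ≤ A) →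
      G p = a p.1 / p.2 ^ 2 := by
    intro p hp
    rw [hGdef]
    exact Set.indicator_of_mem (by rw [hEdef]; exact hp) _
  have hGoff : ∀ p : ℝ × ℝ, ¬(s₀ - A < p.1 ∧ p.1 ≤ s₀ - B ∧ s₀ - p.1 < p.2 ∧ p.2 ≤ A) →
      G p = 0 := by
    intro p hp
    rw [hGdef]
    exact Set.indicator_of_notMem (by rw [hEdef]; exact hp) _
  have hmemE : ∀ p : ℝ × ℝ, p ∈ E ↔
      (s₀ - A < p.1 ∧ p.1 ≤ s₀ - B ∧ s₀ - p.1 < p.2 ∧ p.2 ≤ A) := by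
    intro p
    rw [hEdef]
    exact Iff.rfl
  have hG0 : ∀ p, 0 ≤ G p := by
    intro p
    rw [hGdef]
    exact Set.indicator_nonneg (fun q _ => div_nonneg (h0 q.1) (sq_nonneg q.2)) p
  have hGbd : ∀ p, G p ≤
      ((Set.Ioc (s₀ - A) (s₀ - B)) ×ˢ (Set.Ioc B A)).indicator (fun _ => (B ^ 2)⁻¹) p := by
    intro p
    by_cases hp : s₀ - A < p.1 ∧ p.1 ≤ s₀ - B ∧ s₀ - p.1 < p.2 ∧ p.2 ≤ A
    · rw [hGon p hp]
      obtain ⟨h1p, h2p, h3p, h4p⟩ := hp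
      have hp2 : B < p.2 := by linarith
      rw [Set.indicator_of_mem (Set.mem_prod.2 ⟨Set.mem_Ioc.2 ⟨h1p, h2p⟩, Set.mem_Ioc.2 ⟨hp2, h4p⟩⟩)]
      have : a p.1 / p.2 ^ 2 ≤ 1 / B ^ 2 :=
        div_le_div₀ zero_le_one (h1 p.1) (by positivity) (by nlinarith)
      rw [one_div] at this
      exact this
    · rw [hGoff p hp]
      exact Set.indicator_nonneg (fun q _ => by positivity) p
  have hGint : Integrable G (volume.prod volume) := by
    apply Integrable.mono' (g := ((Set.Ioc (s₀ - A) (s₀ - B)) ×ˢ (Set.Ioc B A)).indicator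
      (fun _ => (B ^ 2)⁻¹)) _ hGmeas.aestronglyMeasurable
    · filter_upwards with p
      rw [Real.norm_eq_abs, abs_of_nonneg (hG0 p)]
      exact hGbd p
    · rw [integrable_indicator_iff (measurableSet_Ioc.prod measurableSet_Ioc)]
      refine integrableOn_const (C := (B ^ 2)⁻¹) ?_ enorm_ne_top
      rw [Measure.prod_prod]
      exact (ENNReal.mul_lt_top measure_Ioc_lt_top measure_Ioc_lt_top).ne
  -- pointwise identity on S
  have key : ∀ s ∈ S, a s / (s₀ - s) = (∫ t, G (s, t)) + a s / A := by
    intro s hs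
    obtain ⟨hs1, hs2⟩ := hs
    have hx0 : 0 < s₀ - s := lt_of_lt_of_le hB0 (by linarith)
    have hxA : s₀ - s < A := by linarith
    have hGst : (fun t => G (s, t)) = (Set.Ioc (s₀ - s) A).indicator (fun t => a s / t ^ 2) := by
      funext t
      by_cases ht : t ∈ Set.Ioc (s₀ - s) A
      · rw [Set.indicator_of_mem ht]
        exact hGon (s, t) ⟨hs1, hs2, ht.1, ht.2⟩
      · rw [Set.indicator_of_notMem ht]
        apply hGoff (s, t)
        intro hmem
        exact ht ⟨hmem.2.2.1, hmem.2.2.2⟩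
    rw [hGst, integral_indicator measurableSet_Ioc,
      ← intervalIntegral.integral_of_le hxA.le]
    have hcalc : ∫ t in (s₀ - s)..A, a s / t ^ 2 = a s * ((s₀ - s)⁻¹ - A⁻¹) := by
      have h2 : ∫ t in (s₀ - s)..A, (t : ℝ) ^ (-2 : ℤ) =
          (A ^ ((-2 : ℤ) + 1) - (s₀ - s) ^ ((-2 : ℤ) + 1)) / (((-2 : ℤ) : ℝ) + 1) :=
        integral_zpow (Or.inr ⟨by norm_num,
          Set.notMem_uIcc_of_lt hx0 hA0⟩)
      have h3 : ∀ t : ℝ, a s / t ^ 2 = a s * t ^ (-2 : ℤ) := by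
        intro t
        rw [zpow_neg, div_eq_mul_inv]
        norm_num
      simp_rw [h3]
      rw [intervalIntegral.integral_const_mul, h2]
      have hA' : A ^ ((-2 : ℤ) + 1) = A⁻¹ := by norm_num
      have hx' : (s₀ - s) ^ ((-2 : ℤ) + 1) = (s₀ - s)⁻¹ := by norm_num
      rw [hA', hx']
      push_cast
      ring
    rw [hcalc]
    field_simp
    ring
  have hg1 : Integrable (fun s => ∫ t, G (s, t)) := hGint.integral_prod_left
  have haS : IntegrableOn a S := hIntOn S hSmeas measure_Ioc_lt_top
  rw [setIntegral_congr_fun hSmeas key,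
    integral_add hg1.integrableOn (haS.div_const A)]
  -- second term
  have hterm2 : (∫ s in S, a s / A) ≤ c := by
    rw [integral_div]
    have hsub : S ⊆ Set.Ioc (s₀ - A) s₀ := Set.Ioc_subset_Ioc_right (by linarith)
    have hmono : (∫ s in S, a s) ≤ ∫ s in Set.Ioc (s₀ - A) s₀, a s :=
      setIntegral_mono_set (hIntOn _ measurableSet_Ioc measure_Ioc_lt_top)
        (Filter.Eventually.of_forall (fun s => h0 s)) (HasSubset.Subset.eventuallyLE hsub)
    have hend := hmax A hA0
    rw [div_le_iff₀ hA0]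
    calc (∫ s in S, a s) ≤ ∫ s in Set.Ioc (s₀ - A) s₀, a s := hmono
      _ ≤ c * A := hend
  -- first term via Fubini
  have hterm1 : (∫ s in S, ∫ t, G (s, t)) ≤ c * (B - Real.log B) := by
    have hnonneg : ∀ s, 0 ≤ ∫ t, G (s, t) := fun s => integral_nonneg (fun t => hG0 _)
    have step1 : (∫ s in S, ∫ t, G (s, t)) ≤ ∫ s, ∫ t, G (s, t) :=
      setIntegral_le_integral hg1 (Filter.Eventually.of_forall hnonneg)
    have hswap : (∫ s, ∫ t, G (s, t)) = ∫ t, ∫ s, G (s, t) :=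
      integral_integral_swap hGint
    have hI : ∀ t, (∫ s, G (s, t)) ≤ (Set.Ioc B A).indicator (fun t => c / t) t := by
      intro t
      by_cases ht : t ∈ Set.Ioc B A
      · rw [Set.indicator_of_mem ht]
        obtain ⟨htB, htA⟩ := ht
        have ht0 : 0 < t := hB0.trans htB
        have hGs : (fun s => G (s, t)) =
            (Set.Ioc (s₀ - t) (s₀ - B)).indicator (fun s => a s / t ^ 2) := by
          funext s
          by_cases hsmem : s ∈ Set.Ioc (s₀ - t) (s₀ - B)
          · rw [Set.indicator_of_mem hsmem]
            exact hGon (s, t)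
              ⟨lt_of_le_of_lt (by linarith) hsmem.1, hsmem.2, by linarith [hsmem.1], htA⟩
          · rw [Set.indicator_of_notMem hsmem]
            apply hGoff (s, t)
            intro hmem
            exact hsmem ⟨by linarith [hmem.2.2.1], hmem.2.1⟩
        rw [hGs, integral_indicator measurableSet_Ioc, integral_div]
        have hmono : (∫ s in Set.Ioc (s₀ - t) (s₀ - B), a s) ≤ ∫ s in Set.Ioc (s₀ - t) s₀, a s :=
          setIntegral_mono_set (hIntOn _ measurableSet_Ioc measure_Ioc_lt_top)
            (Filter.Eventually.of_forall (fun s => h0 s))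
            (HasSubset.Subset.eventuallyLE (Set.Ioc_subset_Ioc_right (by linarith)))
        have hend := hmax t ht0
        rw [div_le_div_iff₀ (by positivity) ht0]
        calc (∫ s in Set.Ioc (s₀ - t) (s₀ - B), a s) * t
            ≤ (c * t) * t := by
              apply mul_le_mul_of_nonneg_right _ ht0.le
              exact hmono.trans hend
          _ = c * t ^ 2 := by ring
      · rw [Set.indicator_of_notMem ht]
        have hz : ∀ s, G (s, t) = 0 := by
          intro s
          apply hGoff (s, t)
          intro hmem
          obtain ⟨h1', h2', h3', h4'⟩ := hmem
          exact ht ⟨by linarith, h4'⟩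
        simp [hz]
    have hInd : Integrable ((Set.Ioc B A).indicator fun t => c / t) := by
      rw [integrable_indicator_iff measurableSet_Ioc]
      apply Integrable.mono' (g := fun _ => c / B)
        (integrableOn_const measure_Ioc_lt_top.ne)
        (measurable_const.div measurable_id').aestronglyMeasurable
      filter_upwards [ae_restrict_mem measurableSet_Ioc] with t ht
      simp only [Real.norm_eq_abs, Pi.div_apply]
      rw [abs_of_nonneg (div_nonneg hc0.le (hB0.trans ht.1).le)]
      exact div_le_div_of_nonneg_left hc0.le hB0 ht.1.le
    have step2 : (∫ t, ∫ s, G (s, t)) ≤ ∫ t, (Set.Ioc B A).indicator (fun t => c / t) t :=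
      integral_mono hGint.integral_prod_right hInd hI
    have hcomp : (∫ t, (Set.Ioc B A).indicator (fun t => c / t) t) = c * (B - Real.log B) := by
      rw [integral_indicator measurableSet_Ioc, ← intervalIntegral.integral_of_le hBA.le]
      have h3 : ∀ t : ℝ, c / t = c * t⁻¹ := fun t => div_eq_mul_inv c t
      simp_rw [h3]
      rw [intervalIntegral.integral_const_mul,
        integral_inv (Set.notMem_uIcc_of_lt hB0 hA0),
        Real.log_div hA0.ne' hB0.ne']
    calc (∫ s in S, ∫ t, G (s, t)) ≤ ∫ s, ∫ t, G (s, t) := step1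
      _ = ∫ t, ∫ s, G (s, t) := hswap
      _ ≤ ∫ t, (Set.Ioc B A).indicator (fun t => c / t) t := step2
      _ = c * (B - Real.log B) := hcomp
  linarith
end

section
/- Let g : ℕ → ℂ be a 1-bounded function, h₁ < h₂ < h₃ distinct integers, and suppose that for some sequences 1 ≤ ω_m ≤ x_m tending to infinity and some sign σ ∈ {−1, +1}, the logarithmic averages satisfy E^{log}_{x_m/ω_m ≤ n ≤ x_m} g(n+h₁)g(n+h₂)g(n+h₃) = σ·E^{log}_{x_m/ω_m ≤ n ≤ x_m} g(n+h₁)g(n+h₁+h₃−h₂)g(n+h₃) + o_{m→∞}(1), and additionally E^{log}_{x_m/ω_m ≤ n ≤ x_m} Re(g(n+h₂)·conj(g(n+h₁+h₃−h₂))) = o_{m→∞}(1) with h₂ ≠ h₁+h₃−h₂. Then limsup_{m→∞} |E^{log}_{x_m/ω_m ≤ n ≤ x_m} g(n+h₁)g(n+h₂)g(n+h₃)| ≤ 1/√2. -/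
open Filter

section Core

open Finset

lemma core_bound (s : Finset ℕ) (hs : s.Nonempty) (h0 : 0 ∉ s)
    (a u v c : ℕ → ℂ) (σ : ℝ) (hσ : σ = 1 ∨ σ = -1)
    (ha : ∀ n, ‖a n‖ ≤ 1) (hu : ∀ n, ‖u n‖ ≤ 1)
    (hv : ∀ n, ‖v n‖ ≤ 1) (hc : ∀ n, ‖c n‖ ≤ 1) :
    ‖(∑ n ∈ s, a n * (u n + (σ : ℂ) * v n) * c n / (n : ℂ)) /
        (∑ n ∈ s, (1 : ℂ) / (n : ℂ))‖
      ≤ Real.sqrt (2 + 2 * ‖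
          (∑ n ∈ s, (((u n * (starRingEnd ℂ) (v n)).re : ℝ) : ℂ) / (n : ℂ)) /
            (∑ n ∈ s, (1 : ℂ) / (n : ℂ))‖) := by
  have hσ2 : σ * σ = 1 := by rcases hσ with h | h <;> simp [h]
  have hnpos : ∀ n ∈ s, 0 < (n : ℝ) := by
    intro n hn
    have : n ≠ 0 := fun h => h0 (h ▸ hn)
    positivity
  set D : ℝ := ∑ n ∈ s, 1 / (n : ℝ) with hDdef
  have hD : 0 < D := by
    apply Finset.sum_pos (fun n hn => by have := hnpos n hn; positivity) hs
  set R : ℝ := ∑ n ∈ s, (u n * (starRingEnd ℂ) (v n)).re / (n : ℝ) with hRdef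
  have hDcast : (∑ n ∈ s, (1 : ℂ) / (n : ℂ)) = (D : ℂ) := by
    rw [hDdef]; push_cast; ring
  have hRcast : (∑ n ∈ s, (((u n * (starRingEnd ℂ) (v n)).re : ℝ) : ℂ) / (n : ℂ)) = (R : ℂ) := by
    rw [hRdef]; push_cast; ring
  rw [hDcast, hRcast, norm_div, norm_div, Complex.norm_real, Complex.norm_real,
    Real.norm_eq_abs, Real.norm_eq_abs, abs_of_pos hD]
  set N : ℝ := ‖∑ n ∈ s, a n * (u n + (σ : ℂ) * v n) * c n / (n : ℂ)‖ with hNdef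
  -- Step A : N ≤ ∑ |u + σ v| / n
  have stepA : N ≤ ∑ n ∈ s, ‖u n + (σ : ℂ) * v n‖ / (n : ℝ) := by
    refine le_trans (norm_sum_le _ _) (Finset.sum_le_sum fun n hn => ?_)
    rw [norm_div, norm_mul, norm_mul, Complex.norm_natCast]
    rw [div_le_div_iff_of_pos_right (hnpos n hn)]
    calc ‖a n‖ * ‖u n + (σ : ℂ) * v n‖ * ‖c n‖
        ≤ 1 * ‖u n + (σ : ℂ) * v n‖ * 1 := by
          gcongr
          exacts [ha n, hc n]
      _ = _ := by ring
  -- Step B : Cauchy-Schwarz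
  set T : ℝ := ∑ n ∈ s, ‖u n + (σ : ℂ) * v n‖ / (n : ℝ) with hTdef
  have stepB : T ^ 2 ≤ D * ∑ n ∈ s, ‖u n + (σ : ℂ) * v n‖ ^ 2 / (n : ℝ) := by
    have := Finset.sum_mul_sq_le_sq_mul_sq s (fun n => Real.sqrt (1 / (n : ℝ)))
      (fun n => ‖u n + (σ : ℂ) * v n‖ * Real.sqrt (1 / (n : ℝ)))
    calc T ^ 2 = (∑ n ∈ s, Real.sqrt (1 / (n : ℝ)) *
          (‖u n + (σ : ℂ) * v n‖ * Real.sqrt (1 / (n : ℝ)))) ^ 2 := by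
          rw [hTdef]; congr 1
          refine Finset.sum_congr rfl fun n hn => ?_
          rw [show Real.sqrt (1 / (n : ℝ)) * (‖u n + (σ : ℂ) * v n‖ *
            Real.sqrt (1 / (n : ℝ))) = ‖u n + (σ : ℂ) * v n‖ *
            (Real.sqrt (1 / (n : ℝ)) * Real.sqrt (1 / (n : ℝ))) from by ring,
            Real.mul_self_sqrt (by positivity)]
          ring
      _ ≤ (∑ n ∈ s, Real.sqrt (1 / (n : ℝ)) ^ 2) *
            ∑ n ∈ s, (‖u n + (σ : ℂ) * v n‖ * Real.sqrt (1 / (n : ℝ))) ^ 2 := this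
      _ = D * ∑ n ∈ s, ‖u n + (σ : ℂ) * v n‖ ^ 2 / (n : ℝ) := by
          rw [hDdef]; congr 1
          · exact Finset.sum_congr rfl fun n hn => Real.sq_sqrt (by positivity)
          · refine Finset.sum_congr rfl fun n hn => ?_
            rw [mul_pow, Real.sq_sqrt (by positivity)]
            ring
  -- Step C : pointwise square bound
  have stepC : ∀ n ∈ s, ‖u n + (σ : ℂ) * v n‖ ^ 2
      ≤ 2 + 2 * (σ * (u n * (starRingEnd ℂ) (v n)).re) := by
    intro n hn
    have h1 : ‖u n‖ ^ 2 ≤ 1 := by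
      have := hu n; nlinarith [norm_nonneg (u n)]
    have h2 : ‖v n‖ ^ 2 ≤ 1 := by
      have := hv n; nlinarith [norm_nonneg (v n)]
    rw [Complex.sq_norm, Complex.normSq_add]
    have e1 : Complex.normSq ((σ : ℂ) * v n) = ‖v n‖ ^ 2 := by
      rw [Complex.normSq_mul, Complex.normSq_ofReal, Complex.sq_norm, hσ2, one_mul]
    have e2 : (u n * (starRingEnd ℂ) ((σ : ℂ) * v n)).re
        = σ * (u n * (starRingEnd ℂ) (v n)).re := by
      rw [map_mul, Complex.conj_ofReal]
      rw [show u n * ((σ : ℂ) * (starRingEnd ℂ) (v n))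
        = (σ : ℂ) * (u n * (starRingEnd ℂ) (v n)) from by ring]
      simp [Complex.mul_re]
    rw [e1, e2, ← Complex.sq_norm (u n)]
    linarith
  -- Step D : summing
  have stepD : (∑ n ∈ s, ‖u n + (σ : ℂ) * v n‖ ^ 2 / (n : ℝ))
      ≤ 2 * D + 2 * (σ * R) := by
    calc (∑ n ∈ s, ‖u n + (σ : ℂ) * v n‖ ^ 2 / (n : ℝ))
        ≤ ∑ n ∈ s, (2 + 2 * (σ * (u n * (starRingEnd ℂ) (v n)).re)) / (n : ℝ) := by
          refine Finset.sum_le_sum fun n hn => ?_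
          rw [div_le_div_iff_of_pos_right (hnpos n hn)]
          exact stepC n hn
      _ = 2 * D + 2 * (σ * R) := by
          have he : ∀ n ∈ s, (2 + 2 * (σ * (u n * (starRingEnd ℂ) (v n)).re)) / (n : ℝ)
              = 2 * (1 / (n : ℝ)) + (2 * σ) * ((u n * (starRingEnd ℂ) (v n)).re / (n : ℝ)) :=
            fun n hn => by ring
          rw [Finset.sum_congr rfl he, Finset.sum_add_distrib, ← Finset.mul_sum,
            ← Finset.mul_sum, hDdef, hRdef]
          ring
  have hTnonneg : 0 ≤ T := Finset.sum_nonneg fun n hn => by positivity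
  have hNT : N ≤ T := stepA
  have hσR : σ * R ≤ |R| := by
    rcases hσ with h | h <;> simp [h] <;> [exact le_abs_self R; exact neg_le_abs R]
  have hN2 : N ^ 2 ≤ D * (2 * D + 2 * |R|) := by
    have h1 : N ^ 2 ≤ T ^ 2 := by
      have hNnn : 0 ≤ N := norm_nonneg _
      nlinarith
    have h2 : D * (∑ n ∈ s, ‖u n + (σ : ℂ) * v n‖ ^ 2 / (n : ℝ))
        ≤ D * (2 * D + 2 * |R|) := by
      apply mul_le_mul_of_nonneg_left _ hD.le
      linarith
    linarith
  -- conclude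
  rw [Real.le_sqrt (by positivity)]
  rw [div_pow]
  rw [div_le_iff₀ (by positivity)]
  have : (2 + 2 * (|R| / D)) * D ^ 2 = D * (2 * D + 2 * |R|) := by
    field_simp
  rw [this]
  exact hN2
  positivity

end Core

/-- Logarithmic average of `f` over the integers in `[A, B]`. -/
noncomputable def Elog (f : ℕ → ℂ) (A B : ℝ) : ℂ :=
  (∑ n ∈ Finset.Icc ⌈A⌉₊ ⌊B⌋₊, f n / (n : ℂ)) /
    (∑ n ∈ Finset.Icc ⌈A⌉₊ ⌊B⌋₊, (1 : ℂ) / (n : ℂ))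

/-- Savings in the logarithmic three-point Elliott conjecture: under the isotopy
identity and the two-point decorrelation hypothesis, the triple correlation is
bounded by `1/√2` in the limit. -/
theorem stmt18 (g : ℤ → ℂ) (hg : ∀ n, ‖g n‖ ≤ 1)
    (h₁ h₂ h₃ : ℤ) (h12 : h₁ < h₂) (h23 : h₂ < h₃)
    (x ω : ℕ → ℝ) (hω1 : ∀ m, 1 ≤ ω m) (hωx : ∀ m, ω m ≤ x m)
    (hω : Filter.Tendsto ω Filter.atTop Filter.atTop)
    (hx : Filter.Tendsto x Filter.atTop Filter.atTop)
    (σ : ℂ) (hσ : σ = 1 ∨ σ = -1)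
    (hiso : Filter.Tendsto (fun m =>
        Elog (fun n => g ((n : ℤ) + h₁) * g ((n : ℤ) + h₂) * g ((n : ℤ) + h₃))
            (x m / ω m) (x m)
          - σ * Elog (fun n =>
              g ((n : ℤ) + h₁) * g ((n : ℤ) + h₁ + h₃ - h₂) * g ((n : ℤ) + h₃))
            (x m / ω m) (x m))
      Filter.atTop (nhds 0))
    (hne : h₂ ≠ h₁ + h₃ - h₂)
    (hdecorr : Filter.Tendsto (fun m =>
        Elog (fun n =>
            ((g ((n : ℤ) + h₂) * (starRingEnd ℂ) (g ((n : ℤ) + h₁ + h₃ - h₂))).re : ℂ))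
          (x m / ω m) (x m))
      Filter.atTop (nhds 0)) :
    Filter.limsup (fun m =>
        ‖Elog (fun n =>
            g ((n : ℤ) + h₁) * g ((n : ℤ) + h₂) * g ((n : ℤ) + h₃))
          (x m / ω m) (x m)‖)
      Filter.atTop ≤ 1 / Real.sqrt 2 := by
  obtain ⟨σr, hσr, hσr'⟩ : ∃ σr : ℝ, σ = (σr : ℂ) ∧ (σr = 1 ∨ σr = -1) := by
    rcases hσ with h | h
    · exact ⟨1, by simp [h], Or.inl rfl⟩
    · exact ⟨-1, by simp [h], Or.inr rfl⟩
  set F : ℕ → ℂ := fun m =>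
    Elog (fun n => g ((n : ℤ) + h₁) * g ((n : ℤ) + h₂) * g ((n : ℤ) + h₃))
      (x m / ω m) (x m) with hFdef
  set G : ℕ → ℂ := fun m =>
    Elog (fun n => g ((n : ℤ) + h₁) * g ((n : ℤ) + h₁ + h₃ - h₂) * g ((n : ℤ) + h₃))
      (x m / ω m) (x m) with hGdef
  set E : ℕ → ℂ := fun m =>
    Elog (fun n =>
        ((g ((n : ℤ) + h₂) * (starRingEnd ℂ) (g ((n : ℤ) + h₁ + h₃ - h₂))).re : ℂ))
      (x m / ω m) (x m) with hEdef
  -- linear combination inside a single Elog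
  have hcomb : ∀ m, F m + σ * G m =
      Elog (fun n => g ((n : ℤ) + h₁) *
          (g ((n : ℤ) + h₂) + (σr : ℂ) * g ((n : ℤ) + h₁ + h₃ - h₂)) * g ((n : ℤ) + h₃))
        (x m / ω m) (x m) := by
    intro m
    simp only [hFdef, hGdef, Elog, hσr]
    rw [show ∀ (p q d : ℂ), p / d + (σr : ℂ) * (q / d) = (p + (σr : ℂ) * q) / d from
      fun p q d => by ring]
    congr 1
    rw [Finset.mul_sum, ← Finset.sum_add_distrib]
    exact Finset.sum_congr rfl fun n _ => by ring
  -- eventual bound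
  have hev : ∀ᶠ m in atTop, ‖F m‖ ≤
      (Real.sqrt (2 + 2 * ‖E m‖) + ‖F m - σ * G m‖) / 2 := by
    filter_upwards [hω.eventually_ge_atTop 2, hx.eventually_ge_atTop 2] with m hω2 hx2
    have hωpos : (0 : ℝ) < ω m := lt_of_lt_of_le one_pos (hω1 m)
    have hxo1 : (1 : ℝ) ≤ x m / ω m := (one_le_div hωpos).mpr (hωx m)
    set s : Finset ℕ := Finset.Icc ⌈x m / ω m⌉₊ ⌊x m⌋₊ with hsdef
    have h0s : 0 ∉ s := by
      simp only [hsdef, Finset.mem_Icc]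
      intro ⟨hle, _⟩
      have : 1 ≤ ⌈x m / ω m⌉₊ := Nat.one_le_ceil_iff.mpr (lt_of_lt_of_le one_pos hxo1)
      omega
    have hsne : s.Nonempty := by
      refine ⟨⌈x m / ω m⌉₊, Finset.mem_Icc.mpr ⟨le_refl _, Nat.le_floor ?_⟩⟩
      have h1 : (⌈x m / ω m⌉₊ : ℝ) < x m / ω m + 1 := Nat.ceil_lt_add_one (by linarith)
      have h2 : x m / ω m ≤ x m / 2 := by
        apply div_le_div_of_nonneg_left (by linarith) (by norm_num) hω2
      have : x m / 2 + 1 ≤ x m := by linarith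
      linarith
    have hcore := core_bound s hsne h0s
      (fun n => g ((n : ℤ) + h₁)) (fun n => g ((n : ℤ) + h₂))
      (fun n => g ((n : ℤ) + h₁ + h₃ - h₂)) (fun n => g ((n : ℤ) + h₃)) σr hσr'
      (fun n => hg _) (fun n => hg _) (fun n => hg _) (fun n => hg _)
    have hcombE : ‖F m + σ * G m‖ ≤ Real.sqrt (2 + 2 * ‖E m‖) := by
      rw [hcomb m]
      exact hcore
    have h2F : (2 : ℂ) * F m = (F m + σ * G m) + (F m - σ * G m) := by ring
    have : ‖(2 : ℂ) * F m‖ ≤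
        Real.sqrt (2 + 2 * ‖E m‖) + ‖F m - σ * G m‖ := by
      rw [h2F]
      exact le_trans (norm_add_le _ _) (by gcongr)
    rw [norm_mul, Complex.norm_two] at this
    linarith
  -- the RHS tends to 1/√2
  have hEabs : Tendsto (fun m => ‖E m‖) atTop (nhds 0) := by
    simpa using hdecorr.norm
  have herrabs : Tendsto (fun m => ‖F m - σ * G m‖) atTop (nhds 0) := by
    simpa using hiso.norm
  have h1 : Tendsto (fun m => 2 + 2 * ‖E m‖) atTop (nhds 2) := by
    have := (hEabs.const_mul (2 : ℝ)).const_add (2 : ℝ)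
    simpa using this
  have h2 : Tendsto (fun m => Real.sqrt (2 + 2 * ‖E m‖)) atTop
      (nhds (Real.sqrt 2)) := (Real.continuous_sqrt.tendsto 2).comp h1
  have hsq2 : Real.sqrt 2 * Real.sqrt 2 = 2 := Real.mul_self_sqrt (by norm_num)
  have hval : (Real.sqrt 2 + 0) / 2 = 1 / Real.sqrt 2 := by
    have h0 : Real.sqrt 2 ≠ 0 := by positivity
    rw [add_zero]
    field_simp
    exact Real.sq_sqrt (by norm_num)
  have hφ : Tendsto (fun m =>
      (Real.sqrt (2 + 2 * ‖E m‖) + ‖F m - σ * G m‖) / 2) atTop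
      (nhds (1 / Real.sqrt 2)) := by
    rw [← hval]
    exact (h2.add herrabs).div_const 2
  refine le_trans (Filter.limsup_le_limsup hev ?_ ?_) hφ.limsup_eq.le
  · show Filter.IsCoboundedUnder (· ≤ ·) atTop fun m => ‖F m‖
    exact Filter.IsBoundedUnder.isCoboundedUnder_le
      (Filter.isBoundedUnder_of ⟨0, fun m => norm_nonneg (F m)⟩)
  · exact hφ.isBoundedUnder_le
end
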